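/- arXiv:1711.08555 — 3 statements merged into one kernel-verified Lean document; each statement's English description precedes it below -/
import Mathlib

section
/- Let m ≥ 2 and let k, r be integers with 1 ≤ k ≤ r < 2k−1. Then the number of paths of length t = 2k−1 in the perfect rooted m-ary tree of depth r equals m^(2k−2) · ( (m^(r−k+2) − 1)/(m−1) − (r−k+2) ). -/
open SimpleGraph Finset

/-- `IsPerfectRootedMary m r H ρ` says that `H` is the perfect rooted `m`-ary tree of
depth `r` with root `ρ`: a tree whose root `ρ` has degree `m`, in which every other
vertex has degree `1` or `m + 1`, whose maximum distance from `ρ` to a vertex is `r`,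
and in which every degree-`1` vertex is at distance exactly `r` from `ρ`.
(For `r = 0` the root-degree condition is dropped, so that the one-vertex tree is the
perfect rooted tree of depth `0`.) -/
def IsPerfectRootedMary (m r : ℕ) {W : Type} [Fintype W] (H : SimpleGraph W)
    [DecidableRel H.Adj] (ρ : W) : Prop :=
  H.IsTree ∧
    (0 < r → H.degree ρ = m) ∧
    (∀ v : W, v ≠ ρ → H.degree v = 1 ∨ H.degree v = m + 1) ∧
    (∀ v : W, H.dist ρ v ≤ r) ∧
    (∃ v : W, H.dist ρ v = r) ∧
    (∀ v : W, H.degree v = 1 → H.dist ρ v = r)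

/-- The number of paths of length `t` in `H`, i.e. the number of unordered pairs of
vertices at distance exactly `t` from each other. -/
noncomputable def pathCount {W : Type} [Fintype W] [DecidableEq W] (H : SimpleGraph W) (t : ℕ) : ℕ :=
  (Finset.univ.filter fun p : Sym2 W => ∃ u v : W, p = s(u, v) ∧ H.dist u v = t).card

section Aux
attribute [local instance 0] Classical.propDecidable
variable {W : Type} {G : SimpleGraph W} {ρ : W} {par : W → W}

private lemma tree_walk_length (hT : G.IsTree) {u v : W}
    (p : G.Walk u v) (hp : p.IsPath) : p.length = G.dist u v := by
  obtain ⟨q, hq, hql⟩ := hT.isConnected.exists_path_of_dist u v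
  rw [(hT.existsUnique_path u v).unique hp hq, hql]

private lemma parent_exists (hT : G.IsTree) (v : W) (hv : v ≠ ρ) :
    ∃ w, G.Adj v w ∧ G.dist ρ w + 1 = G.dist ρ v := by
  have hd : 0 < G.dist ρ v := hT.isConnected.pos_dist_of_ne (Ne.symm hv)
  obtain ⟨p, hp⟩ := hT.isConnected.exists_walk_length_eq_dist ρ v
  obtain ⟨w, ha, q, hq⟩ := SimpleGraph.Walk.exists_eq_cons_of_ne hv p.reverse
  have hlen : q.length + 1 = G.dist ρ v := by
    have := congrArg SimpleGraph.Walk.length hq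
    simpa [hp] using this.symm
  refine ⟨w, ha, ?_⟩
  have h1 : G.dist ρ w ≤ q.length := by
    simpa using G.dist_le q.reverse
  have h2 : G.dist ρ v ≤ G.dist ρ w + 1 := by
    have htri := hT.isConnected.dist_triangle (u := ρ) (v := w) (w := v)
    have : G.dist w v ≤ 1 := by
      simpa using G.dist_le (ha.symm.toWalk)
    omega
  omega

/-- parent hypothesis -/
def HPar (G : SimpleGraph W) (ρ : W) (par : W → W) : Prop :=
  par ρ = ρ ∧ ∀ v, v ≠ ρ → G.Adj v (par v) ∧ G.dist ρ (par v) + 1 = G.dist ρ v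

private lemma depth_anc (hT : G.IsTree) (hp : HPar G ρ par) :
    ∀ (i : ℕ) (v : W), i ≤ G.dist ρ v → G.dist ρ (par^[i] v) + i = G.dist ρ v := by
  intro i
  induction i with
  | zero => simp
  | succ n ih =>
    intro v hle
    have h1 : G.dist ρ (par^[n] v) + n = G.dist ρ v := ih v (by omega)
    have hne : par^[n] v ≠ ρ := by
      intro h
      rw [h] at h1
      simp [SimpleGraph.dist_self] at h1
      omega
    have h2 := (hp.2 _ hne).2
    rw [Function.iterate_succ_apply']
    omega

private lemma anc_eq_root (hT : G.IsTree) (hp : HPar G ρ par) (v : W) {i : ℕ}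
    (hi : G.dist ρ v ≤ i) : par^[i] v = ρ := by
  have h1 : G.dist ρ (par^[G.dist ρ v] v) + G.dist ρ v = G.dist ρ v :=
    depth_anc hT hp _ v le_rfl
  have h2 : par^[G.dist ρ v] v = ρ := by
    have : G.dist ρ (par^[G.dist ρ v] v) = 0 := by omega
    exact ((hT.isConnected.dist_eq_zero_iff).1 this).symm
  obtain ⟨s, rfl⟩ := Nat.exists_eq_add_of_le hi
  rw [add_comm, Function.iterate_add_apply, h2, Function.iterate_fixed hp.1]

private lemma up_walk (hT : G.IsTree) (hp : HPar G ρ par) :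
    ∀ (a : ℕ) (v : W), a ≤ G.dist ρ v →
      ∃ q : G.Walk v (par^[a] v), q.length = a ∧
        q.support = (List.range (a + 1)).map (fun i => par^[i] v) := by
  intro a
  induction a with
  | zero => intro v _; exact ⟨SimpleGraph.Walk.nil, by simp, by simp⟩
  | succ n ih =>
    intro v hle
    have hne : v ≠ ρ := by
      intro h; subst h; simp [SimpleGraph.dist_self] at hle
    have hd : G.dist ρ (par v) + 1 = G.dist ρ v := (hp.2 v hne).2
    obtain ⟨q, hql, hqs⟩ := ih (par v) (by omega)
    refine ⟨(SimpleGraph.Walk.cons (hp.2 v hne).1 q).copy rfl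
      (Function.iterate_succ_apply par n v).symm, ?_, ?_⟩
    · simp [hql]
    · rw [SimpleGraph.Walk.support_copy, SimpleGraph.Walk.support_cons, hqs]
      rw [List.range_succ_eq_map]
      simp [List.map_map, Function.comp_def, Function.iterate_succ_apply]

private lemma up_walk_isPath (hT : G.IsTree) (hp : HPar G ρ par) {a : ℕ} {v : W}
    (ha : a ≤ G.dist ρ v) {q : G.Walk v (par^[a] v)}
    (hqs : q.support = (List.range (a + 1)).map (fun i => par^[i] v)) : q.IsPath := by
  rw [SimpleGraph.Walk.isPath_def, hqs]
  refine List.Nodup.map_on ?_ List.nodup_range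
  intro i hi j hj hij
  rw [List.mem_range] at hi hj
  have h1 := depth_anc hT hp i v (by omega)
  have h2 := depth_anc hT hp j v (by omega)
  rw [hij] at h1
  omega

private lemma mem_up_support (hT : G.IsTree) (hp : HPar G ρ par) {a : ℕ} {v x : W}
    {q : G.Walk v (par^[a] v)}
    (hqs : q.support = (List.range (a + 1)).map (fun i => par^[i] v)) :
    x ∈ q.support ↔ ∃ i ≤ a, par^[i] v = x := by
  rw [hqs]
  simp only [List.mem_map, List.mem_range]
  constructor
  · rintro ⟨i, hi, rfl⟩; exact ⟨i, by omega, rfl⟩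
  · rintro ⟨i, hi, rfl⟩; exact ⟨i, by omega, rfl⟩

/-- distance formula via a "meet" vertex at level `c`. -/
private lemma dist_eq_of_meet (hT : G.IsTree) (hp : HPar G ρ par) {u v : W} {c : ℕ}
    (hcu : c ≤ G.dist ρ u) (hcv : c ≤ G.dist ρ v)
    (heq : par^[G.dist ρ u - c] u = par^[G.dist ρ v - c] v)
    (hmax : ∀ c', c < c' → c' ≤ G.dist ρ u → c' ≤ G.dist ρ v →
      par^[G.dist ρ u - c'] u ≠ par^[G.dist ρ v - c'] v) :
    G.dist u v = (G.dist ρ u - c) + (G.dist ρ v - c) := by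
  set du := G.dist ρ u with hdu
  set dv := G.dist ρ v with hdv
  set a := du - c with hadef
  set b := dv - c with hbdef
  obtain ⟨p, hpl, hps⟩ := up_walk hT hp a u (by omega)
  obtain ⟨q, hql, hqs⟩ := up_walk hT hp b v (by omega)
  set q' : G.Walk v (par^[a] u) := q.copy rfl heq.symm with hq'def
  set w : G.Walk u v := p.append q'.reverse with hwdef
  have hwlen : w.length = a + b := by
    simp [hwdef, hq'def, hpl, hql]
  have hqsup : q'.support = q.support := SimpleGraph.Walk.support_copy _ _ _
  have hqrev_nodup : q'.reverse.support.Nodup := by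
    rw [SimpleGraph.Walk.support_reverse, List.nodup_reverse, hqsup]
    exact (SimpleGraph.Walk.isPath_def _).1 (up_walk_isPath hT hp (by omega) hqs)
  have hcons : q'.reverse.support = par^[a] u :: q'.reverse.support.tail :=
    SimpleGraph.Walk.support_eq_cons _
  have hnotmem : par^[a] u ∉ q'.reverse.support.tail := by
    have := hqrev_nodup
    rw [hcons] at this
    exact (List.nodup_cons.1 this).1
  have hdisj : ∀ x ∈ p.support, x ∉ q'.reverse.support.tail := by
    intro x hxp hxt
    have hxq : x ∈ q.support := by
      have : x ∈ q'.reverse.support := List.mem_of_mem_tail hxt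
      rw [SimpleGraph.Walk.support_reverse, List.mem_reverse, hqsup] at this
      exact this
    obtain ⟨i, hi, hxi⟩ := (mem_up_support hT hp hps).1 hxp
    obtain ⟨j, hj, hxj⟩ := (mem_up_support hT hp hqs).1 hxq
    have hxx : x ≠ par^[a] u := fun hh => hnotmem (hh ▸ hxt)
    have hia : i ≠ a := by
      rintro rfl
      exact hxx hxi.symm
    have hdx1 : G.dist ρ x + i = du := by
      have h := depth_anc hT hp i u (by omega); rw [hxi] at h; exact h
    have hdx2 : G.dist ρ x + j = dv := by
      have h := depth_anc hT hp j v (by omega); rw [hxj] at h; exact h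
    have hclt : c < G.dist ρ x := by omega
    refine hmax (G.dist ρ x) hclt (by omega) (by omega) ?_
    have h1 : du - G.dist ρ x = i := by omega
    have h2 : dv - G.dist ρ x = j := by omega
    rw [h1, h2, hxi, hxj]
  have hwpath : w.IsPath := by
    rw [SimpleGraph.Walk.isPath_def, hwdef, SimpleGraph.Walk.support_append]
    refine List.Nodup.append ?_ (hqrev_nodup.tail) hdisj
    exact (SimpleGraph.Walk.isPath_def _).1 (up_walk_isPath hT hp (by omega) hps)
  rw [← tree_walk_length hT w hwpath, hwlen]

/-- Adjacent vertices have different distances to the root. -/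
private lemma adj_depth_ne (hT : G.IsTree) (hp : HPar G ρ par) {x u : W}
    (hadj : G.Adj x u) : G.dist ρ x ≠ G.dist ρ u := by
  intro he
  set e := G.dist ρ u with hedef
  obtain ⟨q, hql, hqs⟩ := up_walk hT hp e u le_rfl
  have hroot : par^[e] u = ρ := anc_eq_root hT hp u le_rfl
  set q' : G.Walk u ρ := q.copy rfl hroot with hq'def
  have hq'path : q'.IsPath := by
    rw [SimpleGraph.Walk.isPath_def, hq'def, SimpleGraph.Walk.support_copy]
    exact (SimpleGraph.Walk.isPath_def _).1 (up_walk_isPath hT hp le_rfl hqs)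
  have hxnot : x ∉ q'.support := by
    rw [hq'def, SimpleGraph.Walk.support_copy]
    intro hmem
    obtain ⟨i, hi, hxi⟩ := (mem_up_support hT hp hqs).1 hmem
    have := depth_anc hT hp i u (by omega)
    rw [hxi] at this
    have hi0 : i = 0 := by omega
    rw [hi0] at hxi
    exact hadj.ne hxi.symm
  have hQpath : (SimpleGraph.Walk.cons hadj q').IsPath := hq'path.cons hxnot
  obtain ⟨P, hPpath, hPlen⟩ := hT.isConnected.exists_path_of_dist x ρ
  have h1 := tree_walk_length hT _ hQpath
  have : (SimpleGraph.Walk.cons hadj q').length = e + 1 := by simp [hq'def, hql]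
  rw [this] at h1
  have h2 : G.dist x ρ = e := by rw [SimpleGraph.dist_comm]; omega
  omega

/-- the parent is the unique neighbour one level up. -/
private lemma parent_unique (hT : G.IsTree) (hp : HPar G ρ par) {x y : W}
    (hadj : G.Adj x y) (hdd : G.dist ρ y + 1 = G.dist ρ x) : y = par x := by
  have hxρ : x ≠ ρ := by
    intro h; subst h; simp [SimpleGraph.dist_self] at hdd
  set e := G.dist ρ x with hedef
  -- path 1 : x → y → ρ
  obtain ⟨q, hql, hqs⟩ := up_walk hT hp (G.dist ρ y) y le_rfl
  have hroot : par^[G.dist ρ y] y = ρ := anc_eq_root hT hp y le_rfl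
  set q' : G.Walk y ρ := q.copy rfl hroot with hq'def
  have hq'path : q'.IsPath := by
    rw [SimpleGraph.Walk.isPath_def, hq'def, SimpleGraph.Walk.support_copy]
    exact (SimpleGraph.Walk.isPath_def _).1 (up_walk_isPath hT hp le_rfl hqs)
  have hxnot : x ∉ q'.support := by
    rw [hq'def, SimpleGraph.Walk.support_copy]
    intro hmem
    obtain ⟨i, hi, hxi⟩ := (mem_up_support hT hp hqs).1 hmem
    have := depth_anc hT hp i y (by omega)
    rw [hxi] at this
    omega
  -- path 2 : x → par x → ρ
  have hpx := hp.2 x hxρ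
  obtain ⟨s, hsl, hss⟩ := up_walk hT hp (G.dist ρ (par x)) (par x) le_rfl
  have hroot2 : par^[G.dist ρ (par x)] (par x) = ρ := anc_eq_root hT hp (par x) le_rfl
  set s' : G.Walk (par x) ρ := s.copy rfl hroot2 with hs'def
  have hs'path : s'.IsPath := by
    rw [SimpleGraph.Walk.isPath_def, hs'def, SimpleGraph.Walk.support_copy]
    exact (SimpleGraph.Walk.isPath_def _).1 (up_walk_isPath hT hp le_rfl hss)
  have hxnot2 : x ∉ s'.support := by
    rw [hs'def, SimpleGraph.Walk.support_copy]
    intro hmem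
    obtain ⟨i, hi, hxi⟩ := (mem_up_support hT hp hss).1 hmem
    have := depth_anc hT hp i (par x) (by omega)
    rw [hxi] at this
    omega
  have hP1 : (SimpleGraph.Walk.cons hadj q').IsPath := hq'path.cons hxnot
  have hP2 : (SimpleGraph.Walk.cons hpx.1 s').IsPath := hs'path.cons hxnot2
  have heqP := (hT.existsUnique_path x ρ).unique hP1 hP2
  have := congrArg (fun w : G.Walk x ρ => w.getVert 1) heqP
  simpa using this

/-- the level (depth) of the last common ancestor. -/
noncomputable def lcaD (G : SimpleGraph W) (ρ : W) (par : W → W) (u v : W) : ℕ :=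
  Nat.findGreatest (fun c => par^[G.dist ρ u - c] u = par^[G.dist ρ v - c] v)
    (min (G.dist ρ u) (G.dist ρ v))

private lemma lcaD_le (u v : W) : lcaD G ρ par u v ≤ min (G.dist ρ u) (G.dist ρ v) :=
  Nat.findGreatest_le _

private lemma lcaD_spec (hT : G.IsTree) (hp : HPar G ρ par) (u v : W) :
    par^[G.dist ρ u - lcaD G ρ par u v] u = par^[G.dist ρ v - lcaD G ρ par u v] v := by
  have h0 : par^[G.dist ρ u - 0] u = par^[G.dist ρ v - 0] v := by
    rw [Nat.sub_zero, Nat.sub_zero, anc_eq_root hT hp u le_rfl, anc_eq_root hT hp v le_rfl]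
  unfold lcaD
  exact Nat.findGreatest_spec
    (P := fun c => par^[G.dist ρ u - c] u = par^[G.dist ρ v - c] v) (Nat.zero_le _) h0

private lemma lcaD_max {u v : W} {c : ℕ} (hcu : c ≤ G.dist ρ u) (hcv : c ≤ G.dist ρ v)
    (hlt : lcaD G ρ par u v < c) :
    par^[G.dist ρ u - c] u ≠ par^[G.dist ρ v - c] v :=
  Nat.findGreatest_is_greatest
    (P := fun c => par^[G.dist ρ u - c] u = par^[G.dist ρ v - c] v) hlt (le_min hcu hcv)

private lemma dist_eq_lca (hT : G.IsTree) (hp : HPar G ρ par) (u v : W) :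
    G.dist u v = (G.dist ρ u - lcaD G ρ par u v) + (G.dist ρ v - lcaD G ρ par u v) := by
  have hle := lcaD_le (G := G) (ρ := ρ) (par := par) u v
  exact dist_eq_of_meet hT hp (by omega) (by omega) (lcaD_spec hT hp u v)
    (fun c' h1 h2 h3 => lcaD_max h2 h3 h1)

/-- `u` lies strictly below `w`, at relative depth `a`. -/
def Below (G : SimpleGraph W) (ρ : W) (par : W → W) (w : W) (a : ℕ) (u : W) : Prop :=
  par^[a] u = w ∧ G.dist ρ u = G.dist ρ w + a

private lemma depth_lca (hT : G.IsTree) (hp : HPar G ρ par) (u v : W) :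
    G.dist ρ (par^[G.dist ρ u - lcaD G ρ par u v] u) = lcaD G ρ par u v := by
  have hle := lcaD_le (G := G) (ρ := ρ) (par := par) u v
  have := depth_anc hT hp (G.dist ρ u - lcaD G ρ par u v) u (by omega)
  omega

private lemma lca_of_below (hT : G.IsTree) (hp : HPar G ρ par) {w u v : W} {a b : ℕ}
    (hau : Below G ρ par w a u) (hbv : Below G ρ par w b v)
    (ha : 1 ≤ a) (hb : 1 ≤ b) (hne : par^[a - 1] u ≠ par^[b - 1] v) :
    lcaD G ρ par u v = G.dist ρ w := by
  obtain ⟨hau1, hau2⟩ := hau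
  obtain ⟨hbv1, hbv2⟩ := hbv
  set dw := G.dist ρ w with hdw
  have hPw : par^[G.dist ρ u - dw] u = par^[G.dist ρ v - dw] v := by
    rw [hau2, hbv2]
    simpa using hau1.trans hbv1.symm
  have hge : dw ≤ lcaD G ρ par u v := by
    unfold lcaD
    exact Nat.le_findGreatest
      (P := fun c => par^[G.dist ρ u - c] u = par^[G.dist ρ v - c] v)
      (le_min (by omega) (by omega)) hPw
  rcases Nat.lt_or_ge dw (lcaD G ρ par u v) with hlt | hge2
  · exfalso
    set c := lcaD G ρ par u v with hc
    have hcle := lcaD_le (G := G) (ρ := ρ) (par := par) u v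
    have hspec := lcaD_spec hT hp u v
    have e1 : a - 1 = (c - dw - 1) + (G.dist ρ u - c) := by omega
    have e2 : b - 1 = (c - dw - 1) + (G.dist ρ v - c) := by omega
    apply hne
    rw [e1, e2, Function.iterate_add_apply, Function.iterate_add_apply, hspec]
  · omega

private lemma root_depth : G.dist ρ ρ = 0 := SimpleGraph.dist_self

private lemma ne_root_of_depth_pos (hT : G.IsTree) {u : W} (h : 0 < G.dist ρ u) : u ≠ ρ := by
  rintro rfl; simp [SimpleGraph.dist_self] at h

private lemma neighbor_depth (hT : G.IsTree) (hp : HPar G ρ par) {x u : W} (hadj : G.Adj x u) :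
    G.dist ρ u = G.dist ρ x + 1 ∨ G.dist ρ u + 1 = G.dist ρ x := by
  have h1 : G.dist x u = 1 := (SimpleGraph.dist_eq_one_iff_adj).2 hadj
  have h2 : G.dist u x = 1 := (SimpleGraph.dist_eq_one_iff_adj).2 hadj.symm
  have t1 := hT.isConnected.dist_triangle (u := ρ) (v := x) (w := u)
  have t2 := hT.isConnected.dist_triangle (u := ρ) (v := u) (w := x)
  have hne := adj_depth_ne hT hp hadj
  omega

section Fin
variable [Fintype W] [DecidableEq W] [DecidableRel G.Adj]

/-- the children of a vertex -/
noncomputable def childFin (G : SimpleGraph W) (ρ : W) (x : W) : Finset W :=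
  univ.filter (fun u => G.Adj x u ∧ G.dist ρ u = G.dist ρ x + 1)

private lemma child_mem_iff (hT : G.IsTree) (hp : HPar G ρ par) {x u : W} :
    u ∈ childFin G ρ x ↔ (u ≠ ρ ∧ par u = x) := by
  simp only [childFin, mem_filter, mem_univ, true_and]
  constructor
  · rintro ⟨hadj, hd⟩
    have hu : u ≠ ρ := ne_root_of_depth_pos hT (by omega)
    exact ⟨hu, (parent_unique hT hp hadj.symm (by omega)).symm⟩
  · rintro ⟨hu, rfl⟩
    obtain ⟨ha, hd⟩ := hp.2 u hu
    exact ⟨ha.symm, by omega⟩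

private lemma childFin_eq_empty (hdepth : ∀ v : W, G.dist ρ v ≤ r) {x : W}
    (hx : G.dist ρ x = r) : childFin G ρ x = ∅ := by
  ext u
  simp only [childFin, mem_filter, mem_univ, true_and, notMem_empty, iff_false, not_and]
  intro _ hd
  have := hdepth u
  omega

private lemma card_childFin (hT : G.IsTree) (hp : HPar G ρ par) {m r : ℕ}
    (hdegρ : 0 < r → G.degree ρ = m)
    (hdeg : ∀ v : W, v ≠ ρ → G.degree v = 1 ∨ G.degree v = m + 1)
    (hleaf : ∀ v : W, G.degree v = 1 → G.dist ρ v = r)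
    {x : W} (hx : G.dist ρ x < r) : (childFin G ρ x).card = m := by
  by_cases hxρ : x = ρ
  · rw [hxρ]
    rw [hxρ] at hx
    have hEq : G.neighborFinset ρ = childFin G ρ ρ := by
      ext u
      simp only [mem_neighborFinset, childFin, mem_filter, mem_univ, true_and]
      constructor
      · intro hadj
        rcases neighbor_depth hT hp hadj with h | h
        · exact ⟨hadj, h⟩
        · rw [root_depth] at h; omega
      · exact fun h => h.1
    have := hdegρ (by omega)
    rw [← SimpleGraph.card_neighborFinset_eq_degree, hEq] at this
    exact this
  · have hpx := hp.2 x hxρ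
    have hEq : G.neighborFinset x = insert (par x) (childFin G ρ x) := by
      ext u
      simp only [mem_neighborFinset, mem_insert, childFin, mem_filter, mem_univ, true_and]
      constructor
      · intro hadj
        rcases neighbor_depth hT hp hadj with h | h
        · exact Or.inr ⟨hadj, h⟩
        · exact Or.inl (parent_unique hT hp hadj h)
      · rintro (rfl | h)
        · exact hpx.1
        · exact h.1
    have hnot : par x ∉ childFin G ρ x := by
      simp only [childFin, mem_filter, mem_univ, true_and, not_and]
      intro _
      omega
    have hcard : G.degree x = (childFin G ρ x).card + 1 := by
      rw [← SimpleGraph.card_neighborFinset_eq_degree, hEq, Finset.card_insert_of_notMem hnot]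
    rcases hdeg x hxρ with h1 | h1
    · have := hleaf x h1
      omega
    · omega

/-- vertices strictly below `w` at relative depth `a` -/
noncomputable def belowFin (G : SimpleGraph W) (ρ : W) (par : W → W) (w : W) (a : ℕ) :
    Finset W :=
  univ.filter (fun u => par^[a] u = w ∧ G.dist ρ u = G.dist ρ w + a)

private lemma card_belowFin (hT : G.IsTree) (hp : HPar G ρ par) {m r : ℕ}
    (hdegρ : 0 < r → G.degree ρ = m)
    (hdeg : ∀ v : W, v ≠ ρ → G.degree v = 1 ∨ G.degree v = m + 1)
    (hdepth : ∀ v : W, G.dist ρ v ≤ r)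
    (hleaf : ∀ v : W, G.degree v = 1 → G.dist ρ v = r)
    (w : W) (a : ℕ) :
    (belowFin G ρ par w a).card = if G.dist ρ w + a ≤ r then m ^ a else 0 := by
  induction a with
  | zero =>
    rw [if_pos (by simpa using hdepth w)]
    have : belowFin G ρ par w 0 = {w} := by
      ext u
      simp only [belowFin, mem_filter, mem_univ, true_and, Function.iterate_zero, id_eq,
        mem_singleton, add_zero]
      constructor
      · exact fun h => h.1
      · rintro rfl; exact ⟨rfl, rfl⟩
    rw [this]; simp
  | succ a ih =>
    have hmap : ∀ u ∈ belowFin G ρ par w (a + 1), par u ∈ belowFin G ρ par w a := by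
      intro u hu
      simp only [belowFin, mem_filter, mem_univ, true_and] at hu ⊢
      have huρ : u ≠ ρ := ne_root_of_depth_pos hT (by omega)
      obtain ⟨_, hd⟩ := hp.2 u huρ
      refine ⟨?_, by omega⟩
      rw [← Function.iterate_succ_apply]
      exact hu.1
    rw [Finset.card_eq_sum_card_fiberwise hmap]
    have hfib : ∀ x ∈ belowFin G ρ par w a,
        ((belowFin G ρ par w (a + 1)).filter (fun u => par u = x)) = childFin G ρ x := by
      intro x hx
      simp only [belowFin, mem_filter, mem_univ, true_and] at hx
      ext u
      rw [child_mem_iff hT hp]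
      simp only [belowFin, mem_filter, mem_univ, true_and]
      constructor
      · rintro ⟨⟨h1, h2⟩, h3⟩
        exact ⟨ne_root_of_depth_pos hT (by omega), h3⟩
      · rintro ⟨huρ, rfl⟩
        obtain ⟨_, hd⟩ := hp.2 u huρ
        refine ⟨⟨?_, by omega⟩, rfl⟩
        rw [Function.iterate_succ_apply]
        exact hx.1
    rw [Finset.sum_congr rfl (fun x hx => congrArg Finset.card (hfib x hx))]
    by_cases h1 : G.dist ρ w + (a + 1) ≤ r
    · have hcards : ∀ x ∈ belowFin G ρ par w a, (childFin G ρ x).card = m := by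
        intro x hx
        simp only [belowFin, mem_filter, mem_univ, true_and] at hx
        exact card_childFin hT hp hdegρ hdeg hleaf (by omega)
      rw [Finset.sum_congr rfl hcards, Finset.sum_const, smul_eq_mul, ih,
        if_pos (by omega), if_pos h1, pow_succ]
    · rw [if_neg h1]
      by_cases h2 : G.dist ρ w + a ≤ r
      · have hr' : G.dist ρ w + a = r := by omega
        have hcards : ∀ x ∈ belowFin G ρ par w a, (childFin G ρ x).card = 0 := by
          intro x hx
          simp only [belowFin, mem_filter, mem_univ, true_and] at hx
          rw [childFin_eq_empty hdepth (by omega)]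
          simp
        rw [Finset.sum_congr rfl hcards]
        simp
      · have : (belowFin G ρ par w a).card = 0 := by rw [ih, if_neg h2]
        rw [Finset.card_eq_zero] at this
        rw [this]
        simp

private lemma card_depth_eq (hT : G.IsTree) (hp : HPar G ρ par) {m r : ℕ}
    (hdegρ : 0 < r → G.degree ρ = m)
    (hdeg : ∀ v : W, v ≠ ρ → G.degree v = 1 ∨ G.degree v = m + 1)
    (hdepth : ∀ v : W, G.dist ρ v ≤ r)
    (hleaf : ∀ v : W, G.degree v = 1 → G.dist ρ v = r)
    {d : ℕ} (hd : d ≤ r) :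
    (univ.filter (fun x : W => G.dist ρ x = d)).card = m ^ d := by
  have hEq : univ.filter (fun x : W => G.dist ρ x = d) = belowFin G ρ par ρ d := by
    ext x
    simp only [mem_filter, mem_univ, true_and, belowFin, root_depth, zero_add]
    constructor
    · intro h
      exact ⟨anc_eq_root hT hp x (by omega), h⟩
    · exact fun h => h.2
  rw [hEq, card_belowFin hT hp hdegρ hdeg hdepth hleaf, if_pos (by simpa [root_depth] using hd)]

private lemma below_mem_iff {w : W} {a : ℕ} {u : W} :
    u ∈ belowFin G ρ par w a ↔ Below G ρ par w a u := by
  simp [belowFin, Below]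

/-- the `lca` data of an ordered pair -/
noncomputable def lcaPair (G : SimpleGraph W) (ρ : W) (par : W → W) (p : W × W) : W × ℕ :=
  (par^[G.dist ρ p.1 - lcaD G ρ par p.1 p.2] p.1, G.dist ρ p.1 - lcaD G ρ par p.1 p.2)

private lemma fiber_mem (hT : G.IsTree) (hp : HPar G ρ par) {r t : ℕ}
    (hdepth : ∀ v : W, G.dist ρ v ≤ r) (hrt : r < t) {u v w : W} {a : ℕ} :
    (G.dist u v = t ∧ lcaPair G ρ par (u, v) = (w, a)) ↔
      (1 ≤ a ∧ a + 1 ≤ t ∧ Below G ρ par w a u ∧ Below G ρ par w (t - a) v ∧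
        par^[a - 1] u ≠ par^[t - a - 1] v) := by
  have hle := lcaD_le (G := G) (ρ := ρ) (par := par) u v
  have hdu := hdepth u
  have hdv := hdepth v
  constructor
  · rintro ⟨hd, hL⟩
    rw [lcaPair, Prod.mk.injEq] at hL
    dsimp only at hL
    obtain ⟨hw, ha0⟩ := hL
    set c := lcaD G ρ par u v with hc
    have hdist := dist_eq_lca hT hp u v
    have hdlca := depth_lca hT hp u v
    have ha1 : 1 ≤ a := by omega
    have hat : a + 1 ≤ t := by omega
    have hwdep : G.dist ρ w = c := by rw [← hw]; exact hdlca
    refine ⟨ha1, hat, ⟨by rw [← ha0]; exact hw, by omega⟩, ⟨?_, by omega⟩, ?_⟩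
    · have : t - a = G.dist ρ v - c := by omega
      rw [this, ← hw]
      exact (lcaD_spec hT hp u v).symm
    · have hmax := lcaD_max (G := G) (ρ := ρ) (par := par) (u := u) (v := v) (c := c + 1)
        (by omega) (by omega) (by omega)
      have e1 : a - 1 = G.dist ρ u - (c + 1) := by omega
      have e2 : t - a - 1 = G.dist ρ v - (c + 1) := by omega
      rw [e1, e2]
      exact hmax
  · rintro ⟨ha1, hat, hbu, hbv, hne⟩
    have hlca : lcaD G ρ par u v = G.dist ρ w :=
      lca_of_below hT hp hbu hbv ha1 (by omega) hne
    have hdist := dist_eq_lca hT hp u v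
    obtain ⟨hbu1, hbu2⟩ := hbu
    obtain ⟨hbv1, hbv2⟩ := hbv
    rw [hlca] at hdist
    have e1 : G.dist ρ u - G.dist ρ w = a := by omega
    have e2 : G.dist ρ v - G.dist ρ w = t - a := by omega
    constructor
    · rw [hdist, e1, e2]; omega
    · rw [lcaPair, Prod.mk.injEq]
      dsimp only
      rw [hlca]
      exact ⟨by rw [e1]; exact hbu1, e1⟩

private lemma card_fiber (hT : G.IsTree) (hp : HPar G ρ par) {m r t : ℕ}
    (hdegρ : 0 < r → G.degree ρ = m)
    (hdeg : ∀ v : W, v ≠ ρ → G.degree v = 1 ∨ G.degree v = m + 1)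
    (hdepth : ∀ v : W, G.dist ρ v ≤ r)
    (hleaf : ∀ v : W, G.degree v = 1 → G.dist ρ v = r)
    (hrt : r < t) (w : W) (a : ℕ) :
    ((univ : Finset (W × W)).filter
        (fun p => G.dist p.1 p.2 = t ∧ lcaPair G ρ par p = (w, a))).card =
      if 1 ≤ a ∧ a + 1 ≤ t ∧ G.dist ρ w + a ≤ r ∧ G.dist ρ w + (t - a) ≤ r then
        m ^ t - m ^ (t - 1) else 0 := by
  by_cases hc1 : 1 ≤ a ∧ a + 1 ≤ t
  · have hsetEq : (univ : Finset (W × W)).filter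
        (fun p => G.dist p.1 p.2 = t ∧ lcaPair G ρ par p = (w, a)) =
        ((belowFin G ρ par w a) ×ˢ (belowFin G ρ par w (t - a))).filter
          (fun p => par^[a - 1] p.1 ≠ par^[t - a - 1] p.2) := by
      ext ⟨u, v⟩
      rw [mem_filter, mem_filter, mem_product, below_mem_iff, below_mem_iff]
      simp only [mem_univ, true_and]
      try dsimp only
      rw [fiber_mem hT hp hdepth hrt]
      tauto
    rw [hsetEq]
    by_cases hc2 : G.dist ρ w + a ≤ r ∧ G.dist ρ w + (t - a) ≤ r
    · rw [if_pos ⟨hc1.1, hc1.2, hc2.1, hc2.2⟩]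
      -- total count
      have htot : ((belowFin G ρ par w a) ×ˢ (belowFin G ρ par w (t - a))).card = m ^ t := by
        rw [Finset.card_product, card_belowFin hT hp hdegρ hdeg hdepth hleaf,
          card_belowFin hT hp hdegρ hdeg hdepth hleaf, if_pos hc2.1, if_pos hc2.2,
          ← pow_add]
        congr 1
        omega
      -- count of pairs with equal "first child"
      have heqcard : (((belowFin G ρ par w a) ×ˢ (belowFin G ρ par w (t - a))).filter
          (fun p => par^[a - 1] p.1 = par^[t - a - 1] p.2)).card = m ^ (t - 1) := by
        set E := ((belowFin G ρ par w a) ×ˢ (belowFin G ρ par w (t - a))).filter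
          (fun p => par^[a - 1] p.1 = par^[t - a - 1] p.2) with hE
        have hdepw : ∀ c ∈ childFin G ρ w, G.dist ρ c = G.dist ρ w + 1 := by
          intro c hc
          obtain ⟨hcρ, hpc⟩ := (child_mem_iff hT hp).1 hc
          have := (hp.2 c hcρ).2
          rw [hpc] at this
          omega
        have hmap : ∀ p ∈ E, par^[a - 1] p.1 ∈ childFin G ρ w := by
          rintro ⟨u, v⟩ hms
          rw [hE, mem_filter, mem_product, below_mem_iff, below_mem_iff] at hms
          dsimp only at hms ⊢
          obtain ⟨⟨⟨hu1, hu2⟩, hv⟩, heqq⟩ := hms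
          have hdc : G.dist ρ (par^[a - 1] u) + (a - 1) = G.dist ρ u :=
            depth_anc hT hp (a - 1) u (by omega)
          rw [child_mem_iff hT hp]
          refine ⟨ne_root_of_depth_pos hT (by omega), ?_⟩
          have e : a - 1 + 1 = a := by omega
          rw [← e] at hu1
          rw [Function.iterate_succ_apply' par (a - 1) u] at hu1
          exact hu1
        rw [Finset.card_eq_sum_card_fiberwise hmap]
        have hfib : ∀ c ∈ childFin G ρ w,
            (E.filter (fun p => par^[a - 1] p.1 = c)) =
              (belowFin G ρ par c (a - 1)) ×ˢ (belowFin G ρ par c (t - a - 1)) := by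
          intro c hc
          have hcd := hdepw c hc
          obtain ⟨hcρ, hpc⟩ := (child_mem_iff hT hp).1 hc
          ext ⟨u, v⟩
          rw [mem_filter, hE, mem_filter, mem_product, mem_product,
            below_mem_iff, below_mem_iff, below_mem_iff, below_mem_iff]
          dsimp only
          constructor
          · rintro ⟨⟨⟨⟨hu1, hu2⟩, hv1, hv2⟩, heqq⟩, hfc⟩
            refine ⟨⟨hfc, by omega⟩, ?_, by omega⟩
            rw [← heqq]
            exact hfc
          · rintro ⟨⟨hu1, hu2⟩, hv1, hv2⟩
            have hau : par^[a] u = w := by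
              have e : a = 1 + (a - 1) := by omega
              rw [e, Function.iterate_add_apply, hu1]
              simpa using hpc
            have hav : par^[t - a] v = w := by
              have e : t - a = 1 + (t - a - 1) := by omega
              rw [e, Function.iterate_add_apply, hv1]
              simpa using hpc
            exact ⟨⟨⟨⟨hau, by omega⟩, hav, by omega⟩, by rw [hu1, hv1]⟩, hu1⟩
        rw [Finset.sum_congr rfl (fun c hc => congrArg Finset.card (hfib c hc))]
        have hval : ∀ c ∈ childFin G ρ w,
            ((belowFin G ρ par c (a - 1)) ×ˢ (belowFin G ρ par c (t - a - 1))).card =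
              m ^ (t - 2) := by
          intro c hc
          have hcd := hdepw c hc
          rw [Finset.card_product, card_belowFin hT hp hdegρ hdeg hdepth hleaf,
            card_belowFin hT hp hdegρ hdeg hdepth hleaf, if_pos (by omega),
            if_pos (by omega), ← pow_add]
          congr 1
          omega
        rw [Finset.sum_congr rfl hval, Finset.sum_const, smul_eq_mul,
          card_childFin hT hp hdegρ hdeg hleaf (by omega), ← pow_succ']
        congr 1
        omega
      have hsplit := Finset.card_filter_add_card_filter_not
        (s := (belowFin G ρ par w a) ×ˢ (belowFin G ρ par w (t - a)))
        (p := fun p => par^[a - 1] p.1 = par^[t - a - 1] p.2)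
      simp only [ne_eq] at hsplit heqcard htot ⊢
      omega
    · rw [if_neg (by tauto)]
      rw [Finset.card_eq_zero, Finset.filter_eq_empty_iff]
      rintro ⟨u, v⟩ hms
      rw [mem_product, below_mem_iff, below_mem_iff] at hms
      dsimp only at hms ⊢
      obtain ⟨⟨hu1, hu2⟩, hv1, hv2⟩ := hms
      exfalso
      rcases Nat.lt_or_ge r (G.dist ρ w + a) with h | h
      · have := hdepth u; omega
      · have := hdepth v; omega
  · rw [if_neg (by tauto), Finset.card_eq_zero, Finset.filter_eq_empty_iff]
    rintro ⟨u, v⟩ _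
    intro hmem
    obtain ⟨hd, hL⟩ := hmem
    have := (fiber_mem hT hp hdepth hrt).1 ⟨hd, hL⟩
    tauto

private lemma two_mul_pathCount (hT : G.IsTree) {t : ℕ} (ht : 1 ≤ t) :
    2 * pathCount G t =
      ((univ : Finset (W × W)).filter (fun p => G.dist p.1 p.2 = t)).card := by
  rw [pathCount]
  set A := (univ : Finset (W × W)).filter (fun p => G.dist p.1 p.2 = t) with hA
  set P := (Finset.univ.filter fun p : Sym2 W => ∃ u v : W, p = s(u, v) ∧ G.dist u v = t)
    with hP
  have hmapsto : ∀ p ∈ A, s(p.1, p.2) ∈ P := by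
    rintro ⟨u, v⟩ hm
    rw [hA, mem_filter] at hm
    rw [hP, mem_filter]
    exact ⟨mem_univ _, u, v, rfl, hm.2⟩
  rw [Finset.card_eq_sum_card_fiberwise hmapsto]
  have hcards : ∀ z ∈ P, (A.filter (fun p => s(p.1, p.2) = z)).card = 2 := by
    intro z hz
    rw [hP, mem_filter] at hz
    obtain ⟨-, u, v, rfl, hd⟩ := hz
    have hne : u ≠ v := by
      rintro rfl
      rw [SimpleGraph.dist_self] at hd
      omega
    have hset : A.filter (fun p => s(p.1, p.2) = s(u, v)) = {(u, v), (v, u)} := by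
      ext ⟨x, y⟩
      rw [mem_filter, hA, mem_filter]
      simp only [mem_univ, true_and, mem_insert, mem_singleton, Prod.mk.injEq]
      constructor
      · rintro ⟨hdist, heq⟩
        rw [Sym2.eq_iff] at heq
        tauto
      · rintro (⟨rfl, rfl⟩ | ⟨rfl, rfl⟩)
        · exact ⟨hd, rfl⟩
        · exact ⟨by rwa [SimpleGraph.dist_comm], Sym2.eq_swap⟩
    rw [hset, Finset.card_insert_of_notMem, Finset.card_singleton]
    simp only [mem_singleton, Prod.mk.injEq, not_and]
    intro h; exact absurd h hne
  rw [Finset.sum_congr rfl hcards, Finset.sum_const, smul_eq_mul, mul_comm]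

private lemma sum_coeff (x : ℚ) (s : ℕ) :
    (x - 1) ^ 2 * ∑ d ∈ Finset.range (s + 1), x ^ d * ((s : ℚ) + 1 - d) =
      x ^ (s + 2) - 1 - ((s : ℚ) + 2) * (x - 1) := by
  induction s with
  | zero => simp; ring
  | succ n ih =>
    have h1 : ∑ d ∈ Finset.range (n + 2), x ^ d * ((n + 1 : ℕ) + 1 - (d : ℚ)) =
        (∑ d ∈ Finset.range (n + 1), x ^ d * ((n : ℚ) + 1 - d)) +
          ∑ d ∈ Finset.range (n + 2), x ^ d := by
      have h2 : ∀ d ∈ Finset.range (n + 2), x ^ d * ((n + 1 : ℕ) + 1 - (d : ℚ)) =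
          x ^ d * ((n : ℚ) + 1 - d) + x ^ d := by
        intro d _
        push_cast
        ring
      rw [Finset.sum_congr rfl h2, Finset.sum_add_distrib]
      congr 1
      rw [Finset.sum_range_succ]
      have : x ^ (n + 1) * ((n : ℚ) + 1 - (n + 1 : ℕ)) = 0 := by
        push_cast; ring
      rw [this, add_zero]
    rw [h1]
    have hgeo : (∑ i ∈ Finset.range (n + 2), x ^ i) * (x - 1) = x ^ (n + 2) - 1 :=
      geom_sum_mul x (n + 2)
    push_cast at ih ⊢
    linear_combination ih + (x - 1) * hgeo

private lemma card_pairs (hT : G.IsTree) (hp : HPar G ρ par) {m r t : ℕ}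
    (hdegρ : 0 < r → G.degree ρ = m)
    (hdeg : ∀ v : W, v ≠ ρ → G.degree v = 1 ∨ G.degree v = m + 1)
    (hdepth : ∀ v : W, G.dist ρ v ≤ r)
    (hleaf : ∀ v : W, G.degree v = 1 → G.dist ρ v = r)
    (hrt : r < t) :
    ((univ : Finset (W × W)).filter (fun p => G.dist p.1 p.2 = t)).card =
      ∑ d ∈ Finset.range (r + 1),
        m ^ d * ((r - d + 1 - (t - (r - d))) * (m ^ t - m ^ (t - 1))) := by
  have hmapsto : ∀ p ∈ (univ : Finset (W × W)).filter (fun p => G.dist p.1 p.2 = t),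
      lcaPair G ρ par p ∈ (univ : Finset W) ×ˢ Finset.range (r + 1) := by
    rintro ⟨u, v⟩ _
    rw [mem_product, mem_range]
    refine ⟨mem_univ _, ?_⟩
    have h1 : G.dist ρ u - lcaD G ρ par u v ≤ G.dist ρ u := Nat.sub_le _ _
    have h2 := hdepth u
    rw [lcaPair]
    dsimp only
    omega
  rw [Finset.card_eq_sum_card_fiberwise hmapsto, Finset.sum_product]
  have hfibval : ∀ w : W, ∀ a ∈ Finset.range (r + 1),
      (((univ : Finset (W × W)).filter (fun p => G.dist p.1 p.2 = t)).filter
          (fun p => lcaPair G ρ par p = (w, a))).card =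
        if t - (r - G.dist ρ w) ≤ a ∧ a ≤ r - G.dist ρ w then
          m ^ t - m ^ (t - 1) else 0 := by
    intro w a ha
    rw [mem_range] at ha
    rw [Finset.filter_filter, card_fiber hT hp hdegρ hdeg hdepth hleaf hrt w a]
    have hdw := hdepth w
    have hiff : (1 ≤ a ∧ a + 1 ≤ t ∧ G.dist ρ w + a ≤ r ∧ G.dist ρ w + (t - a) ≤ r) ↔
        (t - (r - G.dist ρ w) ≤ a ∧ a ≤ r - G.dist ρ w) := by omega
    rw [if_congr hiff rfl rfl]
  rw [Finset.sum_congr rfl (fun w _ => Finset.sum_congr rfl (hfibval w))]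
  have hinner : ∀ w : W,
      (∑ a ∈ Finset.range (r + 1),
        if t - (r - G.dist ρ w) ≤ a ∧ a ≤ r - G.dist ρ w then m ^ t - m ^ (t - 1) else 0) =
      (r - G.dist ρ w + 1 - (t - (r - G.dist ρ w))) * (m ^ t - m ^ (t - 1)) := by
    intro w
    have hdw := hdepth w
    rw [← Finset.sum_filter]
    have hIcc : (Finset.range (r + 1)).filter
        (fun a => t - (r - G.dist ρ w) ≤ a ∧ a ≤ r - G.dist ρ w) =
        Finset.Icc (t - (r - G.dist ρ w)) (r - G.dist ρ w) := by
      ext a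
      rw [mem_filter, mem_range, Finset.mem_Icc]
      omega
    rw [hIcc, Finset.sum_const, Nat.card_Icc, smul_eq_mul]
  rw [Finset.sum_congr rfl (fun w _ => hinner w)]
  have hmap2 : ∀ w ∈ (univ : Finset W), G.dist ρ w ∈ Finset.range (r + 1) := by
    intro w _
    rw [mem_range]
    have := hdepth w
    omega
  rw [← Finset.sum_fiberwise_of_maps_to hmap2
    (fun w => (r - G.dist ρ w + 1 - (t - (r - G.dist ρ w))) * (m ^ t - m ^ (t - 1)))]
  apply Finset.sum_congr rfl
  intro d hd
  rw [mem_range] at hd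
  have hconst : ∀ w ∈ (univ : Finset W).filter (fun w => G.dist ρ w = d),
      (r - G.dist ρ w + 1 - (t - (r - G.dist ρ w))) * (m ^ t - m ^ (t - 1)) =
        (r - d + 1 - (t - (r - d))) * (m ^ t - m ^ (t - 1)) := by
    intro w hw
    rw [mem_filter] at hw
    rw [hw.2]
  rw [Finset.sum_congr rfl hconst, Finset.sum_const, smul_eq_mul,
    card_depth_eq hT hp hdegρ hdeg hdepth hleaf (by omega)]

end Fin
end Aux


theorem rooted_odd_paths_small_depth (m k r : ℕ) (hm : 2 ≤ m)
    (hk : 1 ≤ k) (hkr : k ≤ r) (hr : r < 2 * k - 1)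
    {W : Type} [Fintype W] [DecidableEq W] (G : SimpleGraph W) [DecidableRel G.Adj]
    (ρ : W) (hG : IsPerfectRootedMary m r G ρ) :
    (pathCount G (2 * k - 1) : ℚ) =
      (m : ℚ) ^ (2 * k - 2) *
        (((m : ℚ) ^ (r - k + 2) - 1) / ((m : ℚ) - 1) - ((r : ℚ) - (k : ℚ) + 2)) := by
  obtain ⟨hT, hdegρ, hdeg, hdepth, -, hleaf⟩ := hG
  -- construct the parent function
  have hEx : ∀ v : W, ∃ w, v ≠ ρ → (G.Adj v w ∧ G.dist ρ w + 1 = G.dist ρ v) := by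
    intro v
    by_cases h : v = ρ
    · exact ⟨ρ, fun hc => absurd h hc⟩
    · obtain ⟨w, h1, h2⟩ := parent_exists hT v h
      exact ⟨w, fun _ => ⟨h1, h2⟩⟩
  choose par0 hpar0 using hEx
  set par : W → W := fun v => if v = ρ then ρ else par0 v with hpardef
  have hp : HPar G ρ par := by
    constructor
    · simp [hpardef]
    · intro v hv
      have h := hpar0 v hv
      simp only [hpardef, if_neg hv]
      exact h
  set t := 2 * k - 1 with ht
  set s := r - k with hs
  have hrt : r < t := hr
  have h1t : 1 ≤ t := by omega
  have hkey := two_mul_pathCount (G := G) hT h1t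
  rw [card_pairs hT hp hdegρ hdeg hdepth hleaf hrt] at hkey
  set C := m ^ t - m ^ (t - 1) with hC
  have hterm : ∀ d ∈ Finset.range (r + 1),
      m ^ d * ((r - d + 1 - (t - (r - d))) * C) = 2 * (m ^ d * ((s + 1 - d) * C)) := by
    intro d hd
    rw [mem_range] at hd
    have hco : r - d + 1 - (t - (r - d)) = 2 * (s + 1 - d) := by omega
    rw [hco]
    ring
  rw [Finset.sum_congr rfl hterm, ← Finset.mul_sum] at hkey
  have hkey2 : pathCount G t = ∑ d ∈ Finset.range (r + 1), m ^ d * ((s + 1 - d) * C) := by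
    omega
  have htrunc : ∑ d ∈ Finset.range (r + 1), m ^ d * ((s + 1 - d) * C) =
      ∑ d ∈ Finset.range (s + 1), m ^ d * ((s + 1 - d) * C) := by
    symm
    apply Finset.sum_subset
    · intro d hd
      rw [mem_range] at *
      omega
    · intro d hd hnd
      rw [mem_range] at hd hnd
      have h0 : s + 1 - d = 0 := by omega
      rw [h0]
      simp
  rw [htrunc] at hkey2
  -- casting to ℚ
  have hle : m ^ (t - 1) ≤ m ^ t := Nat.pow_le_pow_right (by omega) (by omega)
  have hcast : (pathCount G t : ℚ) =
      ∑ d ∈ Finset.range (s + 1),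
        (m : ℚ) ^ d * (((s : ℚ) + 1 - d) * ((m : ℚ) ^ t - (m : ℚ) ^ (t - 1))) := by
    rw [hkey2, Nat.cast_sum]
    apply Finset.sum_congr rfl
    intro d hd
    rw [mem_range] at hd
    have h1 : ((s + 1 - d : ℕ) : ℚ) = (s : ℚ) + 1 - d := by
      have hds : d ≤ s + 1 := by omega
      push_cast [Nat.cast_sub hds]
      ring
    have h2 : ((C : ℕ) : ℚ) = (m : ℚ) ^ t - (m : ℚ) ^ (t - 1) := by
      rw [hC]
      push_cast [Nat.cast_sub hle]
      ring
    rw [Nat.cast_mul, Nat.cast_mul, Nat.cast_pow, h1, h2]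
  have hmne : (m : ℚ) - 1 ≠ 0 := by
    have h2m : (2 : ℚ) ≤ (m : ℚ) := by exact_mod_cast hm
    intro h
    nlinarith
  have hCsplit : (m : ℚ) ^ t - (m : ℚ) ^ (t - 1) = (m : ℚ) ^ (2 * k - 2) * ((m : ℚ) - 1) := by
    have e2 : t - 1 = 2 * k - 2 := by omega
    have e1 : t = 2 * k - 2 + 1 := by omega
    rw [e2, e1, pow_succ]
    ring
  have hsumformula : ∑ d ∈ Finset.range (s + 1),
      (m : ℚ) ^ d * (((s : ℚ) + 1 - d) * ((m : ℚ) ^ t - (m : ℚ) ^ (t - 1))) =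
      (∑ d ∈ Finset.range (s + 1), (m : ℚ) ^ d * ((s : ℚ) + 1 - d)) *
        ((m : ℚ) ^ (2 * k - 2) * ((m : ℚ) - 1)) := by
    rw [Finset.sum_mul]
    apply Finset.sum_congr rfl
    intro d _
    rw [hCsplit]
    ring
  rw [hcast, hsumformula]
  have hrk2 : r - k + 2 = s + 2 := by omega
  have hcastrk : (r : ℚ) - (k : ℚ) + 2 = (s : ℚ) + 2 := by
    rw [hs]
    push_cast [Nat.cast_sub hkr]
    ring
  rw [hrk2, hcastrk]
  have halg := sum_coeff (m : ℚ) s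
  set S := ∑ d ∈ Finset.range (s + 1), (m : ℚ) ^ d * ((s : ℚ) + 1 - d) with hS
  have hfinal : S * ((m : ℚ) - 1) = ((m : ℚ) ^ (s + 2) - 1) / ((m : ℚ) - 1) - ((s : ℚ) + 2) := by
    rw [eq_sub_iff_add_eq, eq_div_iff hmne]
    linear_combination halg
  rw [← hfinal]
  ring
end

section
/- Let m ≥ 2 and let k, r be integers with 1 ≤ k ≤ r < 2k. Then the number of paths of length t = 2k in the perfect rooted m-ary tree of depth r equals m^(2k−1) · ( (1/2)(m+1) · (m^(r−k+1) − 1)/(m−1) − (r−k+1) ). -/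
open SimpleGraph Finset

set_option linter.unusedSectionVars false
namespace PRMAux

variable {W : Type} [Fintype W] [DecidableEq W] {G : SimpleGraph W} [DecidableRel G.Adj] {ρ : W}

lemma dist_split {x y z : W} (p : G.Walk x y) (hz : z ∈ p.support) :
    G.dist x z + G.dist z y ≤ p.length := by
  have h1 : G.dist x z ≤ (p.takeUntil z hz).length := SimpleGraph.dist_le _
  have h2 : G.dist z y ≤ (p.dropUntil z hz).length := SimpleGraph.dist_le _
  have hl : (p.takeUntil z hz).length + (p.dropUntil z hz).length = p.length := by
    rw [← Walk.length_append, p.take_spec hz]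
  omega

lemma adj_dist_cases (hT : G.IsTree) {u v : W} (h : G.Adj u v) :
    G.dist ρ v = G.dist ρ u + 1 ∨ G.dist ρ u = G.dist ρ v + 1 := by
  have hc := hT.isConnected
  have huv : G.dist u v = 1 := dist_eq_one_iff_adj.2 h
  have t1 : G.dist ρ v ≤ G.dist ρ u + G.dist u v := hc.dist_triangle
  have t2 : G.dist ρ u ≤ G.dist ρ v + G.dist v u := hc.dist_triangle
  have hvu : G.dist v u = 1 := by rw [dist_comm]; exact huv
  have hne : G.dist ρ u ≠ G.dist ρ v := by
    intro heq
    obtain ⟨p, hp, hlen⟩ := (hc u ρ).exists_path_of_dist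
    have hvs : v ∉ p.support := by
      intro hv
      have hs := dist_split p hv
      have : G.dist v ρ = G.dist ρ v := dist_comm ..
      have : G.dist u ρ = G.dist ρ u := dist_comm ..
      omega
    have hq : (Walk.cons h.symm p).IsPath := hp.cons hvs
    obtain ⟨p', hp', hlen'⟩ := (hc v ρ).exists_path_of_dist
    have hu := (hT.existsUnique_path v ρ).unique hq hp'
    have : (Walk.cons h.symm p).length = p'.length := by rw [hu]
    rw [Walk.length_cons] at this
    have : G.dist u ρ = G.dist ρ u := dist_comm ..
    have : G.dist v ρ = G.dist ρ v := dist_comm ..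
    omega
  omega

lemma exists_parent (hT : G.IsTree) {v : W} (hv : G.dist ρ v ≠ 0) :
    ∃ x, G.Adj v x ∧ G.dist ρ x + 1 = G.dist ρ v := by
  have hc := hT.isConnected
  obtain ⟨p, hp, hlen⟩ := (hc v ρ).exists_path_of_dist
  have hvρ : G.dist v ρ = G.dist ρ v := dist_comm ..
  cases p with
  | nil => simp at hlen; simp [SimpleGraph.dist_self] at hv
  | @cons _ x _ h q =>
    refine ⟨x, h, ?_⟩
    have h1 : G.dist x ρ ≤ q.length := SimpleGraph.dist_le _
    have h2 : G.dist v ρ ≤ G.dist v x + G.dist x ρ := hc.dist_triangle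
    have h3 : G.dist v x = 1 := dist_eq_one_iff_adj.2 h
    have h4 : G.dist x ρ = G.dist ρ x := dist_comm ..
    rw [Walk.length_cons] at hlen
    omega

lemma parent_unique (hT : G.IsTree) {v x₁ x₂ : W} (h₁ : G.Adj v x₁)
    (hd₁ : G.dist ρ x₁ + 1 = G.dist ρ v) (h₂ : G.Adj v x₂)
    (hd₂ : G.dist ρ x₂ + 1 = G.dist ρ v) : x₁ = x₂ := by
  have hc := hT.isConnected
  obtain ⟨p₁, hp₁, hl₁⟩ := (hc x₁ ρ).exists_path_of_dist
  obtain ⟨p₂, hp₂, hl₂⟩ := (hc x₂ ρ).exists_path_of_dist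
  have key : ∀ {x : W} (hx : G.Adj v x) (hd : G.dist ρ x + 1 = G.dist ρ v)
      (p : G.Walk x ρ), p.length = G.dist x ρ → v ∉ p.support := by
    intro x hx hd p hl hv
    have hs := dist_split p hv
    have e1 : G.dist x ρ = G.dist ρ x := dist_comm ..
    have e2 : G.dist v ρ = G.dist ρ v := dist_comm ..
    have e3 : G.dist x v = 1 := dist_eq_one_iff_adj.2 hx.symm
    omega
  have hq₁ : (Walk.cons h₁ p₁).IsPath := hp₁.cons (key h₁ hd₁ p₁ hl₁)
  have hq₂ : (Walk.cons h₂ p₂).IsPath := hp₂.cons (key h₂ hd₂ p₂ hl₂)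
  have hu := (hT.existsUnique_path v ρ).unique hq₁ hq₂
  have hsup : (Walk.cons h₁ p₁).support = (Walk.cons h₂ p₂).support := by rw [hu]
  rw [Walk.support_cons, Walk.support_cons, p₁.support_eq_cons, p₂.support_eq_cons] at hsup
  simp only [List.cons.injEq] at hsup
  exact hsup.2.1

variable (G ρ) in
/-- The parent function of the tree rooted at `ρ` (identity on `ρ` / junk). -/
noncomputable def par (v : W) : W :=
  if h : ∃ x, G.Adj v x ∧ G.dist ρ x + 1 = G.dist ρ v then h.choose else v

lemma par_spec (hT : G.IsTree) {v : W} (hv : G.dist ρ v ≠ 0) :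
    G.Adj v (par G ρ v) ∧ G.dist ρ (par G ρ v) + 1 = G.dist ρ v := by
  have h := exists_parent hT hv
  rw [par, dif_pos h]
  exact h.choose_spec

lemma par_eq (hT : G.IsTree) {v x : W} (h : G.Adj v x) (hd : G.dist ρ x + 1 = G.dist ρ v) :
    par G ρ v = x := by
  have hv : G.dist ρ v ≠ 0 := by omega
  obtain ⟨h1, h2⟩ := par_spec hT hv (ρ := ρ)
  exact parent_unique hT h1 h2 h hd

lemma depth_par_iter (hT : G.IsTree) :
    ∀ (j : ℕ) (v : W), j ≤ G.dist ρ v → G.dist ρ ((par G ρ)^[j] v) + j = G.dist ρ v := by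
  intro j
  induction j with
  | zero => simp
  | succ n ih =>
    intro v hv
    rw [Function.iterate_succ_apply]
    have h1 := (par_spec (ρ := ρ) hT (v := v) (by omega)).2
    have := ih (par G ρ v) (by omega)
    omega

lemma dist_par_iter (hT : G.IsTree) :
    ∀ (j : ℕ) (v : W), j ≤ G.dist ρ v → G.dist v ((par G ρ)^[j] v) = j := by
  have hc := hT.isConnected
  have hle : ∀ (j : ℕ) (v : W), j ≤ G.dist ρ v → G.dist v ((par G ρ)^[j] v) ≤ j := by
    intro j
    induction j with
    | zero => simp
    | succ n ih =>
      intro v hv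
      rw [Function.iterate_succ_apply]
      have h1 := par_spec (ρ := ρ) hT (v := v) (by omega)
      have h2 : G.dist v (par G ρ v) = 1 := dist_eq_one_iff_adj.2 h1.1
      have h3 := ih (par G ρ v) (by omega)
      have h4 : G.dist v ((par G ρ)^[n] (par G ρ v)) ≤
          G.dist v (par G ρ v) + G.dist (par G ρ v) ((par G ρ)^[n] (par G ρ v)) :=
        hc.dist_triangle
      omega
  intro j v hv
  have h1 := hle j v hv
  have h2 := depth_par_iter hT j v hv
  have h3 : G.dist ρ v ≤ G.dist ρ ((par G ρ)^[j] v) + G.dist ((par G ρ)^[j] v) v :=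
    hc.dist_triangle
  have h4 : G.dist ((par G ρ)^[j] v) v = G.dist v ((par G ρ)^[j] v) := dist_comm ..
  omega

lemma dist_of_meet (hT : G.IsTree) {u v : W} {a b : ℕ}
    (hm : (par G ρ)^[a] u = (par G ρ)^[b] v) (ha : a ≤ G.dist ρ u) (hb : b ≤ G.dist ρ v) :
    G.dist u v ≤ a + b := by
  have hc := hT.isConnected
  have h1 := dist_par_iter hT a u ha
  have h2 := dist_par_iter hT b v hb
  have h3 : G.dist u v ≤ G.dist u ((par G ρ)^[a] u) + G.dist ((par G ρ)^[a] u) v :=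
    hc.dist_triangle
  have h4 : G.dist ((par G ρ)^[a] u) v = G.dist v ((par G ρ)^[b] v) := by
    rw [hm, dist_comm]
  omega

lemma walk_meet (hT : G.IsTree) {u v : W} (p : G.Walk u v) :
    ∃ a b, a + b ≤ p.length ∧ (par G ρ)^[a] u = (par G ρ)^[b] v ∧
      a ≤ G.dist ρ u ∧ b ≤ G.dist ρ v ∧ G.dist ρ u + b = G.dist ρ v + a := by
  induction p with
  | nil => exact ⟨0, 0, by simp⟩
  | @cons u u' v h q ih =>
    obtain ⟨a', b', hab, hm, ha, hb, hd⟩ := ih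
    rw [Walk.length_cons]
    rcases adj_dist_cases (ρ := ρ) hT h with hcase | hcase
    · -- dist ρ u' = dist ρ u + 1, so par u' = u
      have hpu : par G ρ u' = u := par_eq hT h.symm (by omega)
      rcases Nat.eq_zero_or_pos a' with rfl | ha'
      · -- u' = par^[b'] v
        simp only [Function.iterate_zero_apply] at hm
        refine ⟨0, b' + 1, by omega, ?_, by omega, by omega, by omega⟩
        simp only [Function.iterate_zero_apply, Function.iterate_succ_apply']
        rw [← hm, hpu]
      · refine ⟨a' - 1, b', by omega, ?_, by omega, by omega, by omega⟩
        have : a' = (a' - 1) + 1 := by omega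
        rw [this, Function.iterate_succ_apply, hpu] at hm
        exact hm
    · -- dist ρ u = dist ρ u' + 1, so par u = u'
      have hpu : par G ρ u = u' := par_eq hT h (by omega)
      refine ⟨a' + 1, b', by omega, ?_, by omega, by omega, by omega⟩
      rw [Function.iterate_succ_apply, hpu]
      exact hm

lemma exists_canonical (hT : G.IsTree) (u v : W) :
    ∃ a b, G.dist u v = a + b ∧ (par G ρ)^[a] u = (par G ρ)^[b] v ∧
      a ≤ G.dist ρ u ∧ b ≤ G.dist ρ v ∧ G.dist ρ u + b = G.dist ρ v + a := by
  obtain ⟨p, _, hlen⟩ := (hT.isConnected u v).exists_path_of_dist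
  obtain ⟨a, b, hab, hm, ha, hb, hd⟩ := walk_meet (ρ := ρ) hT p
  exact ⟨a, b, le_antisymm (dist_of_meet hT hm ha hb) (by omega), hm, ha, hb, hd⟩

lemma dist_of_branching (hT : G.IsTree) {u v : W} {a b : ℕ} (ha1 : 1 ≤ a) (hb1 : 1 ≤ b)
    (hm : (par G ρ)^[a] u = (par G ρ)^[b] v) (ha : a ≤ G.dist ρ u) (hb : b ≤ G.dist ρ v)
    (hd : G.dist ρ u + b = G.dist ρ v + a)
    (hne : (par G ρ)^[a - 1] u ≠ (par G ρ)^[b - 1] v) : G.dist u v = a + b := by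
  obtain ⟨a', b', hdist, hm', ha', hb', hd'⟩ := exists_canonical (ρ := ρ) hT u v
  have hle : G.dist u v ≤ a + b := dist_of_meet hT hm ha hb
  rcases lt_or_ge a' a with hlt | hge
  · exfalso
    apply hne
    have hb'b : b' < b := by omega
    obtain ⟨c, hc⟩ : ∃ c, a - 1 = c + a' := ⟨a - 1 - a', by omega⟩
    have hc2 : b - 1 = c + b' := by omega
    rw [hc, hc2, Function.iterate_add_apply, Function.iterate_add_apply, hm']
  · omega

variable (G ρ) in
/-- The descendants of `w` at relative depth `a`. -/
noncomputable def desc (w : W) (a : ℕ) : Finset W :=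
  univ.filter (fun u => (par G ρ)^[a] u = w ∧ G.dist ρ u = G.dist ρ w + a)

lemma mem_desc {w u : W} {a : ℕ} :
    u ∈ desc G ρ w a ↔ (par G ρ)^[a] u = w ∧ G.dist ρ u = G.dist ρ w + a := by
  simp [desc]

section Counting

variable {m r : ℕ}

lemma card_children (hT : G.IsTree) (hroot : 0 < r → G.degree ρ = m)
    (hdeg : ∀ v : W, v ≠ ρ → G.degree v = 1 ∨ G.degree v = m + 1)
    (hleaf : ∀ v : W, G.degree v = 1 → G.dist ρ v = r)
    {w : W} (hw : G.dist ρ w < r) : (desc G ρ w 1).card = m := by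
  have hc := hT.isConnected
  have hstep : desc G ρ w 1 =
      (G.neighborFinset w).filter (fun x => G.dist ρ x = G.dist ρ w + 1) := by
    ext x
    simp only [mem_desc, Function.iterate_one, mem_filter, mem_neighborFinset]
    constructor
    · rintro ⟨h1, h2⟩
      have hx0 : G.dist ρ x ≠ 0 := by omega
      have hs := par_spec (ρ := ρ) hT hx0
      rw [h1] at hs
      exact ⟨hs.1.symm, h2⟩
    · rintro ⟨h1, h2⟩
      exact ⟨par_eq hT h1.symm (by omega), h2⟩
  rw [hstep]
  have hsplit := Finset.card_filter_add_card_filter_not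
    (s := G.neighborFinset w) (p := fun x => G.dist ρ x = G.dist ρ w + 1)
  rw [G.card_neighborFinset_eq_degree] at hsplit
  by_cases hwρ : w = ρ
  · have hdw0 : G.dist ρ w = 0 := by rw [hwρ]; exact dist_self ..
    have hneg : (G.neighborFinset w).filter
        (fun x => ¬ G.dist ρ x = G.dist ρ w + 1) = ∅ := by
      ext x
      simp only [mem_filter, mem_neighborFinset, Finset.notMem_empty, iff_false, not_and,
        not_not]
      intro h1
      rcases adj_dist_cases (ρ := ρ) hT h1 with hcase | hcase
      · exact hcase
      · omega
    rw [hneg, card_empty] at hsplit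
    have hdegw : G.degree w = m := by rw [hwρ]; exact hroot (by omega)
    omega
  · have hw0 : G.dist ρ w ≠ 0 := fun h0 => hwρ (hc.dist_eq_zero_iff.mp h0).symm
    have hneg : (G.neighborFinset w).filter
        (fun x => ¬ G.dist ρ x = G.dist ρ w + 1) = {par G ρ w} := by
      ext x
      simp only [mem_filter, mem_neighborFinset, mem_singleton]
      constructor
      · rintro ⟨h1, h2⟩
        rcases adj_dist_cases (ρ := ρ) hT h1 with hcase | hcase
        · exact absurd hcase h2
        · exact (par_eq hT h1 (by omega)).symm
      · rintro rfl
        have hs := par_spec (ρ := ρ) hT hw0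
        exact ⟨hs.1, by omega⟩
    rw [hneg, card_singleton] at hsplit
    have hdw : G.degree w = m + 1 := by
      rcases hdeg w hwρ with h1 | h1
      · exact absurd (hleaf w h1) (by omega)
      · exact h1
    omega

lemma card_desc (hT : G.IsTree) (hroot : 0 < r → G.degree ρ = m)
    (hdeg : ∀ v : W, v ≠ ρ → G.degree v = 1 ∨ G.degree v = m + 1)
    (hleaf : ∀ v : W, G.degree v = 1 → G.dist ρ v = r)
    {w : W} : ∀ {a : ℕ}, G.dist ρ w + a ≤ r → (desc G ρ w a).card = m ^ a := by
  intro a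
  induction a with
  | zero =>
    intro _
    have : desc G ρ w 0 = {w} := by
      ext u
      simp only [mem_desc, Function.iterate_zero_apply, mem_singleton, add_zero]
      constructor
      · exact fun h => h.1
      · rintro rfl; exact ⟨rfl, rfl⟩
    rw [this, card_singleton, pow_zero]
  | succ a ih =>
    intro ha
    have hsplit : desc G ρ w (a + 1) = (desc G ρ w a).biUnion (fun x => desc G ρ x 1) := by
      ext u
      simp only [mem_desc, mem_biUnion]
      constructor
      · rintro ⟨h1, h2⟩
        have hu0 : G.dist ρ u ≠ 0 := by omega
        have hs := par_spec (ρ := ρ) hT hu0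
        refine ⟨par G ρ u, ⟨?_, by omega⟩, ?_, by omega⟩
        · rw [← Function.iterate_succ_apply]; exact h1
        · rw [Function.iterate_one]
      · rintro ⟨x, ⟨hx1, hx2⟩, hu1, hu2⟩
        rw [Function.iterate_one] at hu1
        constructor
        · rw [Function.iterate_succ_apply, hu1, hx1]
        · omega
    rw [hsplit, Finset.card_biUnion]
    · have hconst : ∀ x ∈ desc G ρ w a, (desc G ρ x 1).card = m := by
        intro x hx
        rw [mem_desc] at hx
        exact card_children hT hroot hdeg hleaf (by omega)
      rw [Finset.sum_congr rfl hconst, Finset.sum_const, ih (by omega), smul_eq_mul,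
        pow_succ]
    · intro x hx y hy hxy
      rw [Function.onFun, Finset.disjoint_left]
      intro u hux huy
      rw [mem_desc, Function.iterate_one] at hux huy
      exact absurd (hux.1.symm.trans huy.1) hxy

lemma filter_depth_eq (hT : G.IsTree) (d : ℕ) :
    univ.filter (fun w => G.dist ρ w = d) = desc G ρ ρ d := by
  ext w
  simp only [mem_filter, mem_univ, true_and, mem_desc, dist_self, zero_add]
  constructor
  · intro h
    refine ⟨?_, h⟩
    have := depth_par_iter hT d w (le_of_eq h.symm)
    have h0 : G.dist ρ ((par G ρ)^[d] w) = 0 := by omega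
    exact (hT.isConnected.dist_eq_zero_iff.mp h0).symm
  · exact fun h => h.2

lemma card_le_depth (hT : G.IsTree) (hroot : 0 < r → G.degree ρ = m)
    (hdeg : ∀ v : W, v ≠ ρ → G.degree v = 1 ∨ G.degree v = m + 1)
    (hleaf : ∀ v : W, G.degree v = 1 → G.dist ρ v = r)
    {e : ℕ} (he : e ≤ r) :
    (univ.filter (fun w => G.dist ρ w ≤ e)).card = ∑ d ∈ Finset.range (e + 1), m ^ d := by
  rw [Finset.card_eq_sum_card_fiberwise (f := fun w => G.dist ρ w)
    (t := Finset.range (e + 1)) (fun x hx => by simp at hx ⊢; omega)]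
  refine Finset.sum_congr rfl fun d hd => ?_
  rw [Finset.mem_range] at hd
  have hstep : (univ.filter (fun w => G.dist ρ w ≤ e)).filter (fun w => G.dist ρ w = d) =
      univ.filter (fun w => G.dist ρ w = d) := by
    ext w
    simp only [mem_filter, mem_univ, true_and]
    omega
  rw [hstep, filter_depth_eq hT, card_desc hT hroot hdeg hleaf]
  rw [dist_self]
  omega

variable (G ρ) in
noncomputable def Tset (t : ℕ) : Finset (W × W) :=
  (univ ×ˢ univ).filter (fun p => G.dist p.1 p.2 = t)

variable (G ρ) in
noncomputable def Ta (t a : ℕ) : Finset (W × W) :=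
  (univ ×ˢ univ).filter (fun p =>
    (par G ρ)^[a] p.1 = (par G ρ)^[t - a] p.2 ∧ a ≤ G.dist ρ p.1 ∧
      t - a ≤ G.dist ρ p.2 ∧ G.dist ρ p.1 + (t - a) = G.dist ρ p.2 + a ∧
      (par G ρ)^[a - 1] p.1 ≠ (par G ρ)^[t - a - 1] p.2)

lemma two_mul_pathCount {t : ℕ} (ht : 1 ≤ t) :
    (Tset G t).card = 2 * pathCount G t := by
  classical
  rw [pathCount]
  rw [Finset.card_eq_sum_card_fiberwise (f := fun p : W × W => Sym2.mk p.1 p.2)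
    (t := Finset.univ.filter fun p : Sym2 W => ∃ u v : W, p = s(u, v) ∧ G.dist u v = t)
    (fun p hp => by
      rw [Tset, Finset.mem_coe, Finset.mem_filter] at hp
      exact Finset.mem_coe.mpr <| Finset.mem_filter.mpr ⟨Finset.mem_univ _, p.1, p.2, rfl, hp.2⟩)]
  rw [Finset.sum_congr rfl (g := fun _ => 2), Finset.sum_const, smul_eq_mul, mul_comm]
  intro p hp
  rw [Finset.mem_filter] at hp
  obtain ⟨-, u, v, rfl, hd⟩ := hp
  have huv : u ≠ v := by
    rintro rfl
    rw [SimpleGraph.dist_self] at hd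
    omega
  have hfib : (Tset G t).filter (fun x => Sym2.mk x.1 x.2 = s(u, v)) = {(u, v), (v, u)} := by
    ext ⟨x, y⟩
    rw [Finset.mem_filter, Tset, Finset.mem_filter]
    simp only [Finset.mem_univ, Finset.mem_product, true_and, Finset.mem_insert,
      Finset.mem_singleton, Prod.mk.injEq, Sym2.eq_iff, Prod.swap_prod_mk]
    have hd' : G.dist v u = t := by rw [SimpleGraph.dist_comm]; exact hd
    constructor
    · rintro ⟨-, h⟩
      exact h
    · rintro (⟨rfl, rfl⟩ | ⟨rfl, rfl⟩)
      · exact ⟨hd, Or.inl ⟨rfl, rfl⟩⟩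
      · exact ⟨hd', Or.inr ⟨rfl, rfl⟩⟩
  rw [hfib]
  rw [Finset.card_insert_of_notMem (by simp [Prod.ext_iff]; rintro rfl; exact fun h => huv rfl),
    Finset.card_singleton]

lemma Tset_eq_biUnion {m r : ℕ} (hT : G.IsTree) (hdepth : ∀ v : W, G.dist ρ v ≤ r)
    {t : ℕ} (ht : 2 ≤ t) (hrt : r < t) :
    Tset G t = (Finset.Icc 1 (t - 1)).biUnion (Ta G ρ t) := by
  ext ⟨u, v⟩
  rw [Tset, Finset.mem_filter, Finset.mem_biUnion]
  simp only [Finset.mem_univ, Finset.mem_product, true_and, and_true, Finset.mem_Icc]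
  constructor
  · intro hd
    obtain ⟨a, b, hab, hm, ha, hb, hdd⟩ := exists_canonical (ρ := ρ) hT u v
    rw [hd] at hab
    have ha1 : 1 ≤ a := by
      by_contra h
      have ha0 : a = 0 := by omega
      subst ha0
      rw [Function.iterate_zero_apply] at hm
      have := hdepth v
      omega
    have hb1 : 1 ≤ b := by
      by_contra h
      have hb0 : b = 0 := by omega
      subst hb0
      rw [Function.iterate_zero_apply] at hm
      have := hdepth u
      omega
    have hba : b = t - a := by omega
    refine ⟨a, ⟨ha1, by omega⟩, ?_⟩
    rw [Ta, Finset.mem_filter]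
    dsimp only
    refine ⟨by simp, by rw [← hba]; exact hm, ha, by rw [← hba]; exact hb,
      by omega, ?_⟩
    rw [← hba]
    intro hcon
    have := dist_of_meet hT hcon (by omega) (by omega)
    omega
  · rintro ⟨a, ⟨ha1, ha2⟩, hmem⟩
    rw [Ta, Finset.mem_filter] at hmem
    dsimp only at hmem
    obtain ⟨-, hm, ha, hb, hdd, hne⟩ := hmem
    have := dist_of_branching hT ha1 (by omega) hm ha hb hdd hne
    rw [this]
    omega

lemma Tset_card {m r : ℕ} (hT : G.IsTree) (hdepth : ∀ v : W, G.dist ρ v ≤ r)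
    {t : ℕ} (ht : 2 ≤ t) (hrt : r < t) :
    (Tset G t).card = ∑ a ∈ Finset.Icc 1 (t - 1), (Ta G ρ t a).card := by
  rw [Tset_eq_biUnion (m := m) hT hdepth ht hrt, Finset.card_biUnion]
  intro a₁ h₁ a₂ h₂ hne
  rw [Finset.mem_coe, Finset.mem_Icc] at h₁ h₂
  rw [Function.onFun, Finset.disjoint_left]
  intro p hp₁ hp₂
  rw [Ta, Finset.mem_filter] at hp₁ hp₂
  obtain ⟨-, -, hA1, hB1, hD1, -⟩ := hp₁
  obtain ⟨-, -, hA2, hB2, hD2, -⟩ := hp₂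
  omega

lemma card_Pw (hT : G.IsTree) (hroot : 0 < r → G.degree ρ = m)
    (hdeg : ∀ v : W, v ≠ ρ → G.degree v = 1 ∨ G.degree v = m + 1)
    (hleaf : ∀ v : W, G.degree v = 1 → G.dist ρ v = r)
    (hdepth : ∀ v : W, G.dist ρ v ≤ r)
    {a b : ℕ} (ha1 : 1 ≤ a) (hb1 : 1 ≤ b) (w : W) :
    (((desc G ρ w a ×ˢ desc G ρ w b).filter
        (fun p => (par G ρ)^[a - 1] p.1 ≠ (par G ρ)^[b - 1] p.2)).card) =
      if G.dist ρ w + a ≤ r ∧ G.dist ρ w + b ≤ r then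
        (m * m - m) * (m ^ (a - 1) * m ^ (b - 1)) else 0 := by
  by_cases hcase : G.dist ρ w + a ≤ r ∧ G.dist ρ w + b ≤ r
  · rw [if_pos hcase]
    have hsplit : ((desc G ρ w a ×ˢ desc G ρ w b).filter
        (fun p => (par G ρ)^[a - 1] p.1 ≠ (par G ρ)^[b - 1] p.2)) =
        ((desc G ρ w 1).offDiag).biUnion
          (fun q => desc G ρ q.1 (a - 1) ×ˢ desc G ρ q.2 (b - 1)) := by
      ext p
      simp only [Finset.mem_filter, Finset.mem_product, mem_desc, Finset.mem_biUnion,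
        Finset.mem_offDiag]
      constructor
      · rintro ⟨⟨⟨h1, h2⟩, h3, h4⟩, hne⟩
        have hd1 := depth_par_iter (ρ := ρ) hT (a - 1) p.1 (by omega)
        have hd2 := depth_par_iter (ρ := ρ) hT (b - 1) p.2 (by omega)
        refine ⟨((par G ρ)^[a - 1] p.1, (par G ρ)^[b - 1] p.2),
          ⟨⟨?_, ?_⟩, ⟨?_, ?_⟩, hne⟩, ⟨rfl, ?_⟩, ⟨rfl, ?_⟩⟩
        · dsimp only; rw [← Function.iterate_add_apply, show 1 + (a - 1) = a by omega, h1]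
        · dsimp only; omega
        · dsimp only; rw [← Function.iterate_add_apply, show 1 + (b - 1) = b by omega, h3]
        · dsimp only; omega
        · dsimp only; omega
        · dsimp only; omega
      · rintro ⟨⟨c, c'⟩, ⟨⟨hc1, hc2⟩, ⟨hc'1, hc'2⟩, hqne⟩, ⟨hp1, hp2⟩, hp3, hp4⟩
        dsimp only at hc1 hc2 hc'1 hc'2 hqne hp1 hp2 hp3 hp4
        refine ⟨⟨⟨?_, by omega⟩, ?_, by omega⟩, ?_⟩
        · rw [show a = 1 + (a - 1) by omega, Function.iterate_add_apply, hp1, hc1]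
        · rw [show b = 1 + (b - 1) by omega, Function.iterate_add_apply, hp3, hc'1]
        · rw [hp1, hp3]; exact hqne
    rw [hsplit, Finset.card_biUnion]
    · have hconst : ∀ q ∈ (desc G ρ w 1).offDiag,
          (desc G ρ q.1 (a - 1) ×ˢ desc G ρ q.2 (b - 1)).card =
            m ^ (a - 1) * m ^ (b - 1) := by
        rintro ⟨c, c'⟩ hq
        rw [Finset.mem_offDiag] at hq
        obtain ⟨hc, hc', -⟩ := hq
        rw [mem_desc] at hc hc'
        rw [Finset.card_product, card_desc hT hroot hdeg hleaf (by omega),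
          card_desc hT hroot hdeg hleaf (by omega)]
      rw [Finset.sum_congr rfl hconst, Finset.sum_const, smul_eq_mul,
        Finset.offDiag_card, card_children hT hroot hdeg hleaf (by omega)]
    · rintro ⟨c1, c2⟩ h1 ⟨c3, c4⟩ h2 hne
      rw [Function.onFun, Finset.disjoint_left]
      rintro ⟨x, y⟩ hx hy
      obtain ⟨hx1, hx2⟩ := Finset.mem_product.mp hx
      obtain ⟨hy1, hy2⟩ := Finset.mem_product.mp hy
      rw [mem_desc] at hx1 hx2 hy1 hy2
      dsimp only at hx1 hx2 hy1 hy2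
      exact hne (Prod.ext (hx1.1.symm.trans hy1.1) (hx2.1.symm.trans hy2.1))
  · rw [if_neg hcase]
    rw [Finset.card_eq_zero]
    rw [Finset.eq_empty_iff_forall_notMem]
    rintro ⟨x, y⟩ hp
    rw [Finset.mem_filter, Finset.mem_product, mem_desc, mem_desc] at hp
    obtain ⟨⟨⟨-, h2⟩, -, h4⟩, -⟩ := hp
    dsimp only at h2 h4
    have := hdepth x
    have := hdepth y
    exact hcase ⟨by omega, by omega⟩

lemma card_Ta (hT : G.IsTree) (hroot : 0 < r → G.degree ρ = m)
    (hdeg : ∀ v : W, v ≠ ρ → G.degree v = 1 ∨ G.degree v = m + 1)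
    (hleaf : ∀ v : W, G.degree v = 1 → G.dist ρ v = r)
    (hdepth : ∀ v : W, G.dist ρ v ≤ r)
    {t a : ℕ} (ha1 : 1 ≤ a) (ha2 : a ≤ t - 1) (ht : 2 ≤ t) :
    (Ta G ρ t a).card =
      (univ.filter (fun w => G.dist ρ w + a ≤ r ∧ G.dist ρ w + (t - a) ≤ r)).card *
        ((m * m - m) * (m ^ (a - 1) * m ^ (t - a - 1))) := by
  have hb1 : 1 ≤ t - a := by omega
  have hsplit : Ta G ρ t a = (univ : Finset W).biUnion (fun w =>
      (desc G ρ w a ×ˢ desc G ρ w (t - a)).filter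
        (fun p => (par G ρ)^[a - 1] p.1 ≠ (par G ρ)^[t - a - 1] p.2)) := by
    ext p
    rw [Ta, Finset.mem_filter]
    simp only [Finset.mem_univ, Finset.mem_product, true_and, Finset.mem_biUnion,
      Finset.mem_filter, mem_desc]
    constructor
    · rintro ⟨hm, ha', hb', hdd, hne⟩
      have hd1 := depth_par_iter (ρ := ρ) hT a p.1 ha'
      have hd2 := depth_par_iter (ρ := ρ) hT (t - a) p.2 hb'
      rw [hm] at hd1
      exact ⟨(par G ρ)^[t - a] p.2, ⟨⟨hm, by omega⟩, rfl, by omega⟩, hne⟩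
    · rintro ⟨w, ⟨⟨h1, h2⟩, h3, h4⟩, hne⟩
      exact ⟨h1.trans h3.symm, by omega, by omega, by omega, hne⟩
  rw [hsplit, Finset.card_biUnion]
  · rw [Finset.sum_congr rfl (fun w _ => card_Pw hT hroot hdeg hleaf hdepth ha1 hb1 w)]
    rw [Finset.sum_ite, Finset.sum_const, Finset.sum_const_zero, add_zero, smul_eq_mul]
  · intro w₁ h₁ w₂ h₂ hne
    rw [Function.onFun, Finset.disjoint_left]
    intro p hp₁ hp₂
    rw [Finset.mem_filter, Finset.mem_product, mem_desc] at hp₁ hp₂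
    exact hne (hp₁.1.1.1.symm.trans hp₂.1.1.1)

lemma sum_min_reflect (f : ℕ → ℕ) (s : ℕ) :
    ∑ i ∈ Finset.range (2 * s + 1), f (min i (2 * s - i)) =
      f s + 2 * ∑ i ∈ Finset.range s, f i := by
  rw [Finset.range_eq_Ico, ← Finset.sum_Ico_consecutive _ (Nat.zero_le s) (by omega)]
  have h1 : ∑ i ∈ Finset.Ico 0 s, f (min i (2 * s - i)) = ∑ i ∈ Finset.range s, f i := by
    rw [Nat.Ico_zero_eq_range]
    exact Finset.sum_congr rfl fun i hi => by
      rw [Finset.mem_range] at hi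
      rw [show min i (2 * s - i) = i from by omega]
  have h2 : ∑ i ∈ Finset.Ico s (2 * s + 1), f (min i (2 * s - i)) =
      f s + ∑ i ∈ Finset.range s, f i := by
    rw [Finset.sum_Ico_eq_sum_range, show 2 * s + 1 - s = s + 1 from by omega]
    have e1 : ∑ i ∈ Finset.range (s + 1), f (min (s + i) (2 * s - (s + i))) =
        ∑ i ∈ Finset.range (s + 1), (fun j => f (s + 1 - 1 - j)) i :=
      Finset.sum_congr rfl (fun i hi => by
        rw [Finset.mem_range] at hi
        rw [show min (s + i) (2 * s - (s + i)) = s + 1 - 1 - i from by omega])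
    rw [e1, Finset.sum_range_reflect (fun j => f j) (s + 1), Finset.sum_range_succ]
    omega
  rw [h1, h2]
  ring

end Counting

end PRMAux

open PRMAux in
theorem rooted_even_paths_small_depth (m k r : ℕ) (hm : 2 ≤ m)
    (hk : 1 ≤ k) (hkr : k ≤ r) (hr : r < 2 * k)
    {W : Type} [Fintype W] [DecidableEq W] (G : SimpleGraph W) [DecidableRel G.Adj]
    (ρ : W) (hG : IsPerfectRootedMary m r G ρ) :
    (pathCount G (2 * k) : ℚ) =
      (m : ℚ) ^ (2 * k - 1) *
        ((1 / 2) * ((m : ℚ) + 1) * (((m : ℚ) ^ (r - k + 1) - 1) / ((m : ℚ) - 1)) -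
          ((r : ℚ) - (k : ℚ) + 1)) := by
  obtain ⟨hT, hroot, hdeg, hdepth, -, hleaf⟩ := hG
  obtain ⟨k', rfl⟩ : ∃ k', k = k' + 1 := ⟨k - 1, by omega⟩
  obtain ⟨s, rfl⟩ : ∃ s, r = k' + 1 + s := ⟨r - (k' + 1), by omega⟩
  have hs : s ≤ k' := by omega
  -- Step 1: ordered pairs vs unordered pairs
  have h2P : (Tset G (2 * (k' + 1))).card = 2 * pathCount G (2 * (k' + 1)) :=
    two_mul_pathCount (by omega)
  -- Step 2: decompose by the meeting level
  have hsum : (Tset G (2 * (k' + 1))).card =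
      ∑ a ∈ Finset.Icc 1 (2 * (k' + 1) - 1), (Ta G ρ (2 * (k' + 1)) a).card :=
    Tset_card (m := m) (r := k' + 1 + s) hT hdepth (by omega) (by omega)
  -- Step 3: count each piece
  have hTa : ∑ a ∈ Finset.Icc 1 (2 * (k' + 1) - 1), (Ta G ρ (2 * (k' + 1)) a).card =
      (∑ a ∈ Finset.Icc 1 (2 * (k' + 1) - 1),
        (univ.filter (fun w => G.dist ρ w + a ≤ k' + 1 + s ∧
          G.dist ρ w + (2 * (k' + 1) - a) ≤ k' + 1 + s)).card) *
        ((m * m - m) * m ^ (2 * k')) := by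
    have e1 : ∑ a ∈ Finset.Icc 1 (2 * (k' + 1) - 1), (Ta G ρ (2 * (k' + 1)) a).card =
        ∑ a ∈ Finset.Icc 1 (2 * (k' + 1) - 1),
          (univ.filter (fun w => G.dist ρ w + a ≤ k' + 1 + s ∧
            G.dist ρ w + (2 * (k' + 1) - a) ≤ k' + 1 + s)).card *
            ((m * m - m) * m ^ (2 * k')) :=
      Finset.sum_congr rfl (fun a ha => by
        rw [Finset.mem_Icc] at ha
        rw [card_Ta hT hroot hdeg hleaf hdepth ha.1 ha.2 (by omega), ← pow_add,
          show a - 1 + (2 * (k' + 1) - a - 1) = 2 * k' from by omega])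
    rw [e1, ← Finset.sum_mul]
  -- Step 4: evaluate the level sum
  have hLsum : ∑ a ∈ Finset.Icc 1 (2 * (k' + 1) - 1),
      (univ.filter (fun w => G.dist ρ w + a ≤ k' + 1 + s ∧
        G.dist ρ w + (2 * (k' + 1) - a) ≤ k' + 1 + s)).card =
      (∑ d ∈ Finset.range (s + 1), m ^ d) +
        2 * ∑ i ∈ Finset.range s, ∑ d ∈ Finset.range (i + 1), m ^ d := by
    rw [← Finset.sum_subset (s₁ := Finset.Icc (k' + 1 - s) (k' + 1 + s))
      (by intro a ha; rw [Finset.mem_Icc] at ha ⊢; omega)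
      (fun a ha hnot => by
        rw [Finset.mem_Icc] at ha hnot
        rw [Finset.card_eq_zero, Finset.filter_eq_empty_iff]
        intro w _
        omega)]
    rw [← Finset.Ico_add_one_right_eq_Icc, Finset.sum_Ico_eq_sum_range,
      show k' + 1 + s + 1 - (k' + 1 - s) = 2 * s + 1 from by omega]
    have e2 : ∑ i ∈ Finset.range (2 * s + 1),
        (univ.filter (fun w => G.dist ρ w + (k' + 1 - s + i) ≤ k' + 1 + s ∧
          G.dist ρ w + (2 * (k' + 1) - (k' + 1 - s + i)) ≤ k' + 1 + s)).card =
        ∑ i ∈ Finset.range (2 * s + 1),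
          (fun j => ∑ d ∈ Finset.range (j + 1), m ^ d) (min i (2 * s - i)) :=
      Finset.sum_congr rfl (fun i hi => by
        rw [Finset.mem_range] at hi
        rw [Finset.filter_congr (q := fun w => G.dist ρ w ≤ min i (2 * s - i))
            (fun w _ => by omega),
          card_le_depth hT hroot hdeg hleaf (by omega)])
    rw [e2]
    exact sum_min_reflect (fun j => ∑ d ∈ Finset.range (j + 1), m ^ d) s
  -- Step 5: the ℕ-level count
  have hmain : 2 * pathCount G (2 * (k' + 1)) =
      ((∑ d ∈ Finset.range (s + 1), m ^ d) +
        2 * ∑ i ∈ Finset.range s, ∑ d ∈ Finset.range (i + 1), m ^ d) *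
        ((m * m - m) * m ^ (2 * k')) := by
    rw [← h2P, hsum, hTa, hLsum]
  -- Step 6: pass to ℚ
  have hM1 : (m : ℚ) ≠ 1 := by
    have : (1 : ℚ) < (m : ℚ) := by exact_mod_cast (by omega : 1 < m)
    exact ne_of_gt this
  have hMne : (m : ℚ) - 1 ≠ 0 := sub_ne_zero.mpr hM1
  have hQ : 2 * (pathCount G (2 * (k' + 1)) : ℚ) =
      ((∑ d ∈ Finset.range (s + 1), (m : ℚ) ^ d) +
        2 * ∑ i ∈ Finset.range s, ∑ d ∈ Finset.range (i + 1), (m : ℚ) ^ d) *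
        (((m : ℚ) * (m : ℚ) - (m : ℚ)) * (m : ℚ) ^ (2 * k')) := by
    have hcast := congrArg (Nat.cast : ℕ → ℚ) hmain
    push_cast [Nat.cast_sub (show m ≤ m * m from Nat.le_mul_of_pos_left m (by omega))]
      at hcast
    exact hcast
  have hF : ∑ d ∈ Finset.range (s + 1), (m : ℚ) ^ d =
      ((m : ℚ) ^ (s + 1) - 1) / ((m : ℚ) - 1) := geom_sum_eq hM1 (s + 1)
  have hS : ∑ i ∈ Finset.range s, ∑ d ∈ Finset.range (i + 1), (m : ℚ) ^ d =
      ((m : ℚ) * (((m : ℚ) ^ s - 1) / ((m : ℚ) - 1)) - s) / ((m : ℚ) - 1) := by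
    rw [Finset.sum_congr rfl (fun i _ => geom_sum_eq hM1 (i + 1)), ← Finset.sum_div]
    rw [Finset.sum_sub_distrib, Finset.sum_const, Finset.card_range, nsmul_eq_mul, mul_one]
    rw [Finset.sum_congr rfl (fun i _ => pow_succ' (m : ℚ) i), ← Finset.mul_sum,
      geom_sum_eq hM1 s]
  rw [hF, hS] at hQ
  have hP : (pathCount G (2 * (k' + 1)) : ℚ) =
      (((m : ℚ) ^ (s + 1) - 1) / ((m : ℚ) - 1) +
        2 * ((((m : ℚ) * (((m : ℚ) ^ s - 1) / ((m : ℚ) - 1)) - s) / ((m : ℚ) - 1)))) *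
        (((m : ℚ) * (m : ℚ) - (m : ℚ)) * (m : ℚ) ^ (2 * k')) / 2 := by
    rw [eq_div_iff (by norm_num : (2 : ℚ) ≠ 0)]
    linarith [hQ]
  rw [show 2 * (k' + 1) - 1 = 2 * k' + 1 from by omega,
    show k' + 1 + s - (k' + 1) + 1 = s + 1 from by omega, hP]
  push_cast
  field_simp
  ring
end

section
/- Let m ≥ 2 and let k, r be integers with 1 ≤ k and r ≥ 2k. Then the number of paths of length t = 2k in the perfect rooted m-ary tree of depth r equals m^(2k−1) · ( (1/2)(m+1) · (m^(r−k+1) − 1)/(m−1) − k ). -/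
open SimpleGraph Finset

set_option linter.unusedSectionVars false
set_option maxHeartbeats 1000000

section TreeAuxStuff

variable {W : Type} [Fintype W] [DecidableEq W] {G : SimpleGraph W} [DecidableRel G.Adj] {ρ : W}

namespace TreeAux

-- ===== from b.lean =====





noncomputable def upath (hT : G.IsTree) (u v : W) : G.Walk u v :=
  (hT.existsUnique_path u v).exists.choose

lemma upath_isPath (hT : G.IsTree) (u v : W) : (upath hT u v).IsPath :=
  (hT.existsUnique_path u v).exists.choose_spec

lemma upath_unique (hT : G.IsTree) {u v : W} (p : G.Walk u v) (hp : p.IsPath) :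
    p = upath hT u v :=
  (hT.existsUnique_path u v).unique hp (upath_isPath hT u v)

lemma length_upath (hT : G.IsTree) (u v : W) : (upath hT u v).length = G.dist u v := by
  refine le_antisymm ?_ (SimpleGraph.dist_le _)
  obtain ⟨q, hq⟩ := (hT.isConnected.preconnected u v).exists_walk_length_eq_dist
  have := upath_unique hT q.bypass q.bypass_isPath
  calc (upath hT u v).length = q.bypass.length := by rw [this]
    _ ≤ q.length := q.length_bypass_le
    _ = G.dist u v := hq

lemma isPath_length_eq_dist (hT : G.IsTree) {u v : W} (p : G.Walk u v) (hp : p.IsPath) :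
    p.length = G.dist u v := by
  rw [upath_unique hT p hp, length_upath]

/-- Parent of a vertex: second vertex on the unique path to the root. -/
noncomputable def par (hT : G.IsTree) (ρ v : W) : W := (upath hT v ρ).getVert 1

lemma adj_par (hT : G.IsTree) {v : W} (hv : v ≠ ρ) : G.Adj v (par hT ρ v) :=
  (upath hT v ρ).adj_snd (SimpleGraph.Walk.not_nil_of_ne hv)

lemma dist_par (hT : G.IsTree) {v : W} (hv : v ≠ ρ) :
    G.dist ρ (par hT ρ v) + 1 = G.dist ρ v := by
  have hnil : ¬ (upath hT v ρ).Nil := SimpleGraph.Walk.not_nil_of_ne hv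
  have htail : (upath hT v ρ).tail.IsPath := (upath_isPath hT v ρ).tail
  have h1 : (upath hT v ρ).tail.length = G.dist (par hT ρ v) ρ :=
    isPath_length_eq_dist hT _ htail
  have h2 : (upath hT v ρ).tail.length + 1 = (upath hT v ρ).length :=
    (upath hT v ρ).length_tail_add_one hnil
  rw [length_upath] at h2
  rw [SimpleGraph.dist_comm (u := ρ) (v := v), ← h2, h1, SimpleGraph.dist_comm]

/-- Any neighbour of `v` which is closer to the root is the parent. -/
lemma eq_par (hT : G.IsTree) {v x : W} (hadj : G.Adj v x)
    (hx : G.dist ρ x + 1 = G.dist ρ v) : x = par hT ρ v := by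
  have hv : v ≠ ρ := by
    rintro rfl; simp [SimpleGraph.dist_self] at hx
  -- unique path x → ρ
  have hvx : v ∉ (upath hT x ρ).support := by
    intro hmem
    have := isPath_length_eq_dist hT _ ((upath_isPath hT x ρ).dropUntil hmem)
    have hle := SimpleGraph.Walk.length_dropUntil_le (upath hT x ρ) hmem
    rw [length_upath] at hle
    -- dist v ρ ≤ dist x ρ, contradiction with dist x + 1 = dist v
    rw [this] at hle
    rw [SimpleGraph.dist_comm (u := v) (v := ρ), SimpleGraph.dist_comm (u := x) (v := ρ)] at hle
    omega
  have hpath : (SimpleGraph.Walk.cons hadj (upath hT x ρ)).IsPath :=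
    (upath_isPath hT x ρ).cons hvx
  have := upath_unique hT _ hpath
  have hgv : (SimpleGraph.Walk.cons hadj (upath hT x ρ)).getVert 1 = x := by
    rw [SimpleGraph.Walk.getVert_cons _ hadj one_ne_zero, Nat.sub_self, SimpleGraph.Walk.getVert_zero]
  rw [this] at hgv
  exact hgv.symm

/-- Depths of adjacent vertices differ by exactly one. -/
lemma adj_dist_cases (hT : G.IsTree) {x y : W} (h : G.Adj x y) :
    G.dist ρ y = G.dist ρ x + 1 ∨ G.dist ρ x = G.dist ρ y + 1 := by
  by_cases hy : y ∈ (upath hT x ρ).support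
  · right
    have hdrop := isPath_length_eq_dist hT _ ((upath_isPath hT x ρ).dropUntil hy)
    have htake := isPath_length_eq_dist hT _ ((upath_isPath hT x ρ).takeUntil hy)
    have hspec : _ = upath hT x ρ := (upath hT x ρ).take_spec hy
    have hlen : ((upath hT x ρ).takeUntil y hy).length + ((upath hT x ρ).dropUntil y hy).length
        = (upath hT x ρ).length := by
      rw [← SimpleGraph.Walk.length_append, hspec]
    rw [length_upath] at hlen
    have hxy1 : G.dist x y = 1 := SimpleGraph.dist_eq_one_iff_adj.2 h
    rw [htake, hdrop, hxy1] at hlen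
    rw [SimpleGraph.dist_comm (u := ρ) (v := x), SimpleGraph.dist_comm (u := ρ) (v := y)]
    omega
  · left
    have hpath : (SimpleGraph.Walk.cons (h.symm) (upath hT x ρ)).IsPath :=
      (upath_isPath hT x ρ).cons hy
    have := isPath_length_eq_dist hT _ hpath
    simp only [SimpleGraph.Walk.length_cons] at this
    rw [length_upath] at this
    rw [SimpleGraph.dist_comm (u := ρ) (v := x), SimpleGraph.dist_comm (u := ρ) (v := y)]
    omega


-- ===== from c.lean =====

-- placeholders for already-proved lemmas

lemma depth_eq_zero (hT : G.IsTree) {v : W} : G.dist ρ v = 0 ↔ v = ρ := by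
  constructor
  · intro h
    rcases SimpleGraph.dist_eq_zero_iff_eq_or_not_reachable.1 h with h' | h'
    · exact h'.symm
    · exact absurd (hT.isConnected.preconnected ρ v) h'
  · rintro rfl; exact SimpleGraph.dist_self

lemma dist_iterate_par (hT : G.IsTree) (ρ : W) :
    ∀ n (v : W), n ≤ G.dist ρ v → G.dist ρ ((par hT ρ)^[n] v) + n = G.dist ρ v := by
  intro n
  induction n with
  | zero => intro v _; simp
  | succ n ih =>
    intro v hn
    have hv : v ≠ ρ := by
      intro h; subst h; simp [SimpleGraph.dist_self] at hn
    rw [Function.iterate_succ_apply]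
    have hpar := dist_par hT hv
    have := ih (par hT ρ v) (by omega)
    omega

/-- ancestor of `v` at depth `j` (for `j ≤` depth of `v`). -/
noncomputable def ancAt (hT : G.IsTree) (ρ : W) (j : ℕ) (v : W) : W :=
  (par hT ρ)^[G.dist ρ v - j] v

lemma dist_ancAt (hT : G.IsTree) {j : ℕ} {v : W} (hj : j ≤ G.dist ρ v) :
    G.dist ρ (ancAt hT ρ j v) = j := by
  have := dist_iterate_par hT ρ (G.dist ρ v - j) v (by omega)
  unfold ancAt
  omega

lemma ancAt_self (hT : G.IsTree) (v : W) : ancAt hT ρ (G.dist ρ v) v = v := by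
  unfold ancAt; simp

lemma ancAt_zero (hT : G.IsTree) (v : W) : ancAt hT ρ 0 v = ρ :=
  (depth_eq_zero hT).1 (dist_ancAt hT (Nat.zero_le _))

lemma ancAt_par (hT : G.IsTree) {v : W} {j : ℕ} (hv : v ≠ ρ) (hj : j + 1 ≤ G.dist ρ v) :
    ancAt hT ρ j (par hT ρ v) = ancAt hT ρ j v := by
  unfold ancAt
  have h1 := dist_par hT hv
  have h2 : G.dist ρ v - j = (G.dist ρ (par hT ρ v) - j) + 1 := by omega
  rw [h2, Function.iterate_succ_apply]

lemma ancAt_eq_par (hT : G.IsTree) {j : ℕ} {v : W} (h : G.dist ρ v = j + 1) :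
    ancAt hT ρ j v = par hT ρ v := by
  unfold ancAt
  rw [h]
  have : j + 1 - j = 1 := by omega
  rw [this, Function.iterate_one]

lemma ancAt_ancAt (hT : G.IsTree) {v : W} {i j : ℕ} (hi : i ≤ j) (hj : j ≤ G.dist ρ v) :
    ancAt hT ρ i (ancAt hT ρ j v) = ancAt hT ρ i v := by
  have hd := dist_ancAt hT (ρ := ρ) (v := v) hj
  show (par hT ρ)^[G.dist ρ (ancAt hT ρ j v) - i] (ancAt hT ρ j v) = ancAt hT ρ i v
  rw [hd]
  unfold ancAt
  rw [← Function.iterate_add_apply]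
  congr 1
  omega

lemma adj_ancAt (hT : G.IsTree) {v : W} {j : ℕ} (hj : j + 1 ≤ G.dist ρ v) :
    G.Adj (ancAt hT ρ j v) (ancAt hT ρ (j+1) v) := by
  have h1 : ancAt hT ρ j (ancAt hT ρ (j+1) v) = ancAt hT ρ j v :=
    ancAt_ancAt hT (by omega) hj
  have hne : ancAt hT ρ (j+1) v ≠ ρ := by
    intro h
    have := dist_ancAt hT (ρ := ρ) (v := v) hj
    rw [h] at this
    simp [SimpleGraph.dist_self] at this
  have hadj := adj_par hT hne
  have : ancAt hT ρ j (ancAt hT ρ (j+1) v) = par hT ρ (ancAt hT ρ (j+1) v) := by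
    show (par hT ρ)^[G.dist ρ (ancAt hT ρ (j+1) v) - j] (ancAt hT ρ (j+1) v) = _
    rw [dist_ancAt hT hj]
    have h9 : j + 1 - j = 1 := by omega
    rw [h9]
    rfl
  rw [h1] at this
  rw [this]
  exact hadj.symm

/-- set of common-ancestor depths. -/
noncomputable def commSet (hT : G.IsTree) (ρ u v : W) : Finset ℕ :=
  (Finset.range (min (G.dist ρ u) (G.dist ρ v) + 1)).filter
    (fun j => ancAt hT ρ j u = ancAt hT ρ j v)

lemma commSet_nonempty (hT : G.IsTree) (u v : W) : (commSet hT ρ u v).Nonempty :=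
  ⟨0, by simp [commSet, ancAt_zero]⟩

/-- depth of the meet of `u` and `v`. -/
noncomputable def mu (hT : G.IsTree) (ρ u v : W) : ℕ :=
  (commSet hT ρ u v).max' (commSet_nonempty hT u v)

lemma mu_mem (hT : G.IsTree) (u v : W) : mu hT ρ u v ∈ commSet hT ρ u v :=
  (commSet hT ρ u v).max'_mem (commSet_nonempty hT u v)

lemma mu_le_left (hT : G.IsTree) (u v : W) : mu hT ρ u v ≤ G.dist ρ u := by
  have := mu_mem hT (ρ := ρ) u v
  simp only [commSet, Finset.mem_filter, Finset.mem_range] at this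
  omega

lemma mu_le_right (hT : G.IsTree) (u v : W) : mu hT ρ u v ≤ G.dist ρ v := by
  have := mu_mem hT (ρ := ρ) u v
  simp only [commSet, Finset.mem_filter, Finset.mem_range] at this
  omega

lemma ancAt_mu (hT : G.IsTree) (u v : W) :
    ancAt hT ρ (mu hT ρ u v) u = ancAt hT ρ (mu hT ρ u v) v := by
  have := mu_mem hT (ρ := ρ) u v
  simp only [commSet, Finset.mem_filter] at this
  exact this.2

lemma le_mu (hT : G.IsTree) {u v : W} {j : ℕ} (hju : j ≤ G.dist ρ u) (hjv : j ≤ G.dist ρ v)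
    (h : ancAt hT ρ j u = ancAt hT ρ j v) : j ≤ mu hT ρ u v := by
  apply Finset.le_max'
  simp only [commSet, Finset.mem_filter, Finset.mem_range]
  exact ⟨by omega, h⟩

lemma mu_comm (hT : G.IsTree) (u v : W) : mu hT ρ u v = mu hT ρ v u := by
  unfold mu
  congr 1
  unfold commSet
  rw [min_comm]
  apply Finset.filter_congr
  intro j _
  simp [eq_comm]

lemma mu_self (hT : G.IsTree) (v : W) : mu hT ρ v v = G.dist ρ v :=
  le_antisymm (mu_le_left hT v v) (le_mu hT le_rfl le_rfl rfl)

lemma mu_lt_of_ne (hT : G.IsTree) {u v : W} (hne : u ≠ v)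
    (hd : G.dist ρ u = G.dist ρ v) : mu hT ρ u v < G.dist ρ u := by
  rcases Nat.lt_or_ge (mu hT ρ u v) (G.dist ρ u) with h | h
  · exact h
  · exfalso
    have h1 : mu hT ρ u v = G.dist ρ u := le_antisymm (mu_le_left hT u v) h
    have h2 := ancAt_mu hT (ρ := ρ) u v
    rw [h1] at h2
    rw [ancAt_self hT u] at h2
    rw [hd] at h2
    rw [ancAt_self hT v] at h2
    exact hne h2


-- ===== from d.lean =====

/-- The key step: if `u ≠ v` and `u` is at most as deep as `v`, the distance from `u`
to the parent of `v` is one less. -/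
lemma dist_par_step (hT : G.IsTree) (ρ : W) : ∀ n : ℕ, ∀ u v : W, G.dist u v ≤ n → u ≠ v →
    G.dist ρ u ≤ G.dist ρ v → G.dist u (par hT ρ v) + 1 = G.dist u v := by
  intro n
  induction n with
  | zero =>
    intro u v h hne _
    exfalso
    have h0 : G.dist u v = 0 := by omega
    rcases SimpleGraph.dist_eq_zero_iff_eq_or_not_reachable.1 h0 with h' | h'
    · exact hne h'
    · exact h' (hT.isConnected.preconnected u v)
  | succ n ih =>
    intro u v hle hne hdepth
    have hconn := hT.isConnected
    have hd_pos : 0 < G.dist u v := by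
      rcases Nat.eq_zero_or_pos (G.dist u v) with h | h
      · exfalso
        rcases SimpleGraph.dist_eq_zero_iff_eq_or_not_reachable.1 h with h' | h'
        · exact hne h'
        · exact h' (hconn.preconnected u v)
      · exact h
    -- the second vertex on the unique path from u to v
    set p := upath hT u v with hp
    have hnil : ¬ p.Nil := SimpleGraph.Walk.not_nil_of_ne hne
    set y := p.getVert 1 with hy
    have hadj : G.Adj u y := p.adj_snd hnil
    have htail : p.tail.IsPath := (upath_isPath hT u v).tail
    have hlen : p.tail.length + 1 = p.length := p.length_tail_add_one hnil
    have hplen : p.length = G.dist u v := isPath_length_eq_dist hT p (upath_isPath hT u v)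
    have hdyv : G.dist y v = G.dist u v - 1 := by
      have h1 : G.dist y v ≤ p.tail.length := SimpleGraph.dist_le _
      have h2 : G.dist u v ≤ G.dist u y + G.dist y v := hconn.dist_triangle
      have h3 : G.dist u y ≤ 1 := by
        have := SimpleGraph.dist_eq_one_iff_adj.2 hadj
        omega
      omega
    rcases eq_or_ne y v with hyv | hyv
    · -- then u and v are adjacent
      rw [hyv] at hadj
      have h1 : G.dist u v = 1 := SimpleGraph.dist_eq_one_iff_adj.2 hadj
      have hcase : G.dist ρ v = G.dist ρ u + 1 := by
        rcases adj_dist_cases hT (ρ := ρ) hadj with h | h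
        · exact h
        · omega
      have hupv : u = par hT ρ v := eq_par hT hadj.symm (by omega)
      rw [← hupv, SimpleGraph.dist_self]
      omega
    rcases adj_dist_cases hT (ρ := ρ) hadj with hcase | hcase
    · -- depth y = depth u + 1
      rcases Nat.lt_or_ge (G.dist ρ u) (G.dist ρ v) with hlt | hge
      · -- depth u < depth v : use IH on (y, v)
        have hih := ih y v (by omega) hyv (by omega)
        have htri1 : G.dist u (par hT ρ v) ≤ 1 + G.dist y (par hT ρ v) := by
          have := hconn.dist_triangle (u := u) (v := y) (w := par hT ρ v)
          have h3 : G.dist u y ≤ 1 := by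
            have := SimpleGraph.dist_eq_one_iff_adj.2 hadj
            omega
          omega
        have htri2 : G.dist u v ≤ G.dist u (par hT ρ v) + 1 := by
          have hvne : v ≠ ρ := by
            intro h; subst h
            simp [SimpleGraph.dist_self] at hlt
          have hadjpv : G.Adj (par hT ρ v) v := (adj_par hT hvne).symm
          have := hconn.dist_triangle (u := u) (v := par hT ρ v) (w := v)
          have := SimpleGraph.dist_eq_one_iff_adj.2 hadjpv
          omega
        omega
      · -- depth u = depth v : contradiction via IH on (v, y)
        exfalso
        have hdeq : G.dist ρ u = G.dist ρ v := le_antisymm hdepth hge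
        have hvy : v ≠ y := fun h => hyv h.symm
        have hih := ih v y (by rw [SimpleGraph.dist_comm]; omega) hvy (by omega)
        -- par y = u
        have hyu : u = par hT ρ y := eq_par hT hadj.symm (by omega)
        rw [← hyu] at hih
        rw [SimpleGraph.dist_comm (u := v) (v := u)] at hih
        rw [SimpleGraph.dist_comm (u := v) (v := y)] at hih
        omega
    · -- depth y = depth u - 1
      have hih := ih y v (by omega) hyv (by omega)
      have htri1 : G.dist u (par hT ρ v) ≤ 1 + G.dist y (par hT ρ v) := by
        have := hconn.dist_triangle (u := u) (v := y) (w := par hT ρ v)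
        have h3 : G.dist u y ≤ 1 := by
          have := SimpleGraph.dist_eq_one_iff_adj.2 hadj
          omega
        omega
      have htri2 : G.dist u v ≤ G.dist u (par hT ρ v) + 1 := by
        have hvne : v ≠ ρ := by
          intro h
          have hv0 : G.dist ρ v = 0 := by rw [h]; exact SimpleGraph.dist_self
          have hu0 : G.dist ρ u = 0 := by omega
          exact hne (((depth_eq_zero hT).1 hu0).trans h.symm)
        have hadjpv : G.Adj (par hT ρ v) v := (adj_par hT hvne).symm
        have := hconn.dist_triangle (u := u) (v := par hT ρ v) (w := v)
        have := SimpleGraph.dist_eq_one_iff_adj.2 hadjpv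
        omega
      omega

lemma mu_par (hT : G.IsTree) {u v : W} (hne : u ≠ v) (hdepth : G.dist ρ u ≤ G.dist ρ v) :
    mu hT ρ u (par hT ρ v) = mu hT ρ u v := by
  have hvne : v ≠ ρ := by
    intro h
    have hv0 : G.dist ρ v = 0 := by rw [h]; exact SimpleGraph.dist_self
    have h0 : G.dist ρ u = 0 := by omega
    exact hne (((depth_eq_zero hT).1 h0).trans h.symm)
  have hdv : 0 < G.dist ρ v := by
    rcases Nat.eq_zero_or_pos (G.dist ρ v) with h | h
    · exact absurd ((depth_eq_zero hT).1 h) hvne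
    · exact h
  have hdpar := dist_par hT (ρ := ρ) hvne
  apply le_antisymm
  · -- mu u (par v) ≤ mu u v
    have h1 := mu_le_left hT (ρ := ρ) u (par hT ρ v)
    have h2 := mu_le_right hT (ρ := ρ) u (par hT ρ v)
    have h3 := ancAt_mu hT (ρ := ρ) u (par hT ρ v)
    rw [ancAt_par hT hvne (by omega)] at h3
    exact le_mu hT h1 (by omega) h3
  · -- mu u v ≤ mu u (par v)
    have h1 := mu_le_left hT (ρ := ρ) u v
    have h2 := mu_le_right hT (ρ := ρ) u v
    have h3 := ancAt_mu hT (ρ := ρ) u v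
    have hmulev : mu hT ρ u v ≤ G.dist ρ v - 1 := by
      rcases Nat.lt_or_ge (G.dist ρ u) (G.dist ρ v) with hlt | hge
      · omega
      · have hdeq : G.dist ρ u = G.dist ρ v := le_antisymm hdepth hge
        have := mu_lt_of_ne hT (ρ := ρ) hne hdeq
        omega
    rw [← ancAt_par hT hvne (j := mu hT ρ u v) (by omega)] at h3
    exact le_mu hT h1 (by omega) h3

/-- Main distance formula: `dist u v = depth u + depth v - 2 * (meet depth)`. -/
lemma dist_formula (hT : G.IsTree) (ρ : W) : ∀ n : ℕ, ∀ u v : W,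
    G.dist ρ u + G.dist ρ v ≤ n →
    G.dist u v + 2 * mu hT ρ u v = G.dist ρ u + G.dist ρ v := by
  intro n
  induction n with
  | zero =>
    intro u v h
    have hu : G.dist ρ u = 0 := by omega
    have hv : G.dist ρ v = 0 := by omega
    have : u = v := by
      rw [(depth_eq_zero hT).1 hu, (depth_eq_zero hT).1 hv]
    subst this
    rw [mu_self hT]
    simp [SimpleGraph.dist_self]
    omega
  | succ n ih =>
    have key : ∀ u v : W, G.dist ρ u + G.dist ρ v ≤ n + 1 → u ≠ v →
        G.dist ρ u ≤ G.dist ρ v →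
        G.dist u v + 2 * mu hT ρ u v = G.dist ρ u + G.dist ρ v := by
      intro u v hsum hne hdepth
      have hvne : v ≠ ρ := by
        intro h
        have hv0 : G.dist ρ v = 0 := by rw [h]; exact SimpleGraph.dist_self
        have h0 : G.dist ρ u = 0 := by omega
        exact hne (((depth_eq_zero hT).1 h0).trans h.symm)
      have hdv : 0 < G.dist ρ v := by
        rcases Nat.eq_zero_or_pos (G.dist ρ v) with h | h
        · exact absurd ((depth_eq_zero hT).1 h) hvne
        · exact h
      have hdpar := dist_par hT (ρ := ρ) hvne
      have hstep := dist_par_step hT ρ (G.dist u v) u v le_rfl hne hdepth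
      have hmu := mu_par hT (ρ := ρ) hne hdepth
      by_cases hupv : u = par hT ρ v
      · have h0 : G.dist u (par hT ρ v) = 0 := by rw [← hupv]; exact SimpleGraph.dist_self
        rw [h0] at hstep
        have : mu hT ρ u (par hT ρ v) = G.dist ρ u := by
          rw [← hupv, mu_self hT]
        rw [this] at hmu
        rw [← hupv] at hdpar
        omega
      · have hih := ih u (par hT ρ v) (by omega)
        rw [hmu] at hih
        omega
    intro u v hsum
    rcases le_total (G.dist ρ u) (G.dist ρ v) with hd | hd
    · by_cases hne : u = v
      · subst hne
        rw [mu_self hT]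
        simp [SimpleGraph.dist_self]
        omega
      · exact key u v hsum hne hd
    · by_cases hne : v = u
      · subst hne
        rw [mu_self hT]
        simp [SimpleGraph.dist_self]
        omega
      · have := key v u (by omega) hne hd
        rw [SimpleGraph.dist_comm (u := v) (v := u), mu_comm hT] at this
        omega

lemma dist_formula' (hT : G.IsTree) (ρ u v : W) :
    G.dist u v + 2 * mu hT ρ u v = G.dist ρ u + G.dist ρ v :=
  dist_formula hT ρ _ u v le_rfl

-- ===== from e.lean =====

/-- descendants of `w` exactly `a` levels below. -/
noncomputable def desc (hT : G.IsTree) (ρ w : W) (a : ℕ) : Finset W :=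
  @Finset.filter _
    (fun v => G.dist ρ v = G.dist ρ w + a ∧ ancAt hT ρ (G.dist ρ w) v = w)
    (Classical.decPred _) Finset.univ

lemma mem_desc (hT : G.IsTree) {w v : W} {a : ℕ} :
    v ∈ desc hT ρ w a ↔ G.dist ρ v = G.dist ρ w + a ∧ ancAt hT ρ (G.dist ρ w) v = w := by
  simp [desc]

lemma self_mem_desc (hT : G.IsTree) (w : W) : w ∈ desc hT ρ w 0 := by
  rw [mem_desc hT]
  exact ⟨by omega, ancAt_self hT w⟩

lemma desc_zero (hT : G.IsTree) (w : W) : desc hT ρ w 0 = {w} := by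
  apply Finset.eq_singleton_iff_unique_mem.2
  refine ⟨self_mem_desc hT w, ?_⟩
  intro v hv
  rw [mem_desc hT] at hv
  obtain ⟨h1, h2⟩ := hv
  rw [← h2]
  have : G.dist ρ w = G.dist ρ v := by omega
  rw [this, ancAt_self hT v]

lemma desc_one_eq (hT : G.IsTree) (w : W) :
    desc hT ρ w 1 = (G.neighborFinset w).filter (fun v => G.dist ρ v = G.dist ρ w + 1) := by
  ext v
  rw [mem_desc hT, Finset.mem_filter, SimpleGraph.mem_neighborFinset]
  constructor
  · rintro ⟨h1, h2⟩
    have hvρ : v ≠ ρ := by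
      intro h; rw [h] at h1; rw [SimpleGraph.dist_self] at h1; omega
    have hpar : ancAt hT ρ (G.dist ρ w) v = par hT ρ v := ancAt_eq_par hT h1
    rw [hpar] at h2
    have := adj_par hT hvρ
    rw [h2] at this
    exact ⟨this.symm, h1⟩
  · rintro ⟨hadj, h1⟩
    refine ⟨h1, ?_⟩
    rw [ancAt_eq_par hT h1]
    exact (eq_par hT hadj.symm (by omega)).symm

/-- every vertex strictly above the leaf level has exactly `m` children. -/
lemma card_desc_one (hT : G.IsTree) {m r : ℕ} (hr0 : 0 < r)
    (hdegρ : 0 < r → G.degree ρ = m)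
    (hdeg : ∀ v : W, v ≠ ρ → G.degree v = 1 ∨ G.degree v = m + 1)
    (hleaf : ∀ v : W, G.degree v = 1 → G.dist ρ v = r)
    {w : W} (hw : G.dist ρ w < r) :
    (desc hT ρ w 1).card = m := by
  rw [desc_one_eq hT]
  by_cases hwρ : w = ρ
  · rw [hwρ]
    have : (G.neighborFinset ρ).filter (fun v => G.dist ρ v = G.dist ρ ρ + 1)
        = G.neighborFinset ρ := by
      apply Finset.filter_true_of_mem
      intro v hv
      rw [SimpleGraph.mem_neighborFinset] at hv
      rcases adj_dist_cases hT (ρ := ρ) hv with h | h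
      · rw [SimpleGraph.dist_self] at h ⊢; omega
      · rw [SimpleGraph.dist_self] at h; omega
    rw [this]
    exact hdegρ hr0
  · have hpar_mem : par hT ρ w ∈ G.neighborFinset w := by
      rw [SimpleGraph.mem_neighborFinset]
      exact adj_par hT hwρ
    have hdw : 0 < G.dist ρ w := by
      rcases Nat.eq_zero_or_pos (G.dist ρ w) with h | h
      · exact absurd ((depth_eq_zero hT).1 h) hwρ
      · exact h
    have hdpar := dist_par hT (ρ := ρ) hwρ
    have hfilt : (G.neighborFinset w).filter (fun v => G.dist ρ v = G.dist ρ w + 1)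
        = (G.neighborFinset w).erase (par hT ρ w) := by
      ext v
      rw [Finset.mem_filter, Finset.mem_erase, SimpleGraph.mem_neighborFinset]
      constructor
      · rintro ⟨hadj, h1⟩
        refine ⟨?_, hadj⟩
        intro h
        rw [h] at h1
        omega
      · rintro ⟨hne, hv⟩
        refine ⟨hv, ?_⟩
        rcases adj_dist_cases hT (ρ := ρ) hv with h | h
        · exact h
        · exact absurd (eq_par hT hv h.symm) hne
    rw [hfilt, Finset.card_erase_of_mem hpar_mem]
    have hdegw : G.degree w = m + 1 := by
      rcases hdeg w hwρ with h | h
      · exfalso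
        have := hleaf w h
        omega
      · exact h
    rw [SimpleGraph.card_neighborFinset_eq_degree, hdegw]
    omega

lemma desc_succ (hT : G.IsTree) (w : W) (a : ℕ) :
    desc hT ρ w (a + 1) = (desc hT ρ w a).biUnion (fun u => desc hT ρ u 1) := by
  ext v
  rw [mem_desc hT, Finset.mem_biUnion]
  constructor
  · rintro ⟨h1, h2⟩
    have hvρ : v ≠ ρ := by
      intro h; rw [h, SimpleGraph.dist_self] at h1; omega
    have hdpar := dist_par hT (ρ := ρ) hvρ
    refine ⟨par hT ρ v, ?_, ?_⟩
    · rw [mem_desc hT]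
      constructor
      · omega
      · rw [ancAt_par hT hvρ (by omega)]
        exact h2
    · rw [mem_desc hT]
      constructor
      · omega
      · exact ancAt_eq_par hT (by omega)
  · rintro ⟨u, hu, hv⟩
    rw [mem_desc hT] at hu hv
    obtain ⟨hu1, hu2⟩ := hu
    obtain ⟨hv1, hv2⟩ := hv
    constructor
    · omega
    · rw [← ancAt_ancAt hT (i := G.dist ρ w) (j := G.dist ρ u) (by omega) (by omega), hv2, hu2]

lemma desc_card (hT : G.IsTree) {m r : ℕ} (hr0 : 0 < r)
    (hdegρ : 0 < r → G.degree ρ = m)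
    (hdeg : ∀ v : W, v ≠ ρ → G.degree v = 1 ∨ G.degree v = m + 1)
    (hleaf : ∀ v : W, G.degree v = 1 → G.dist ρ v = r)
    (w : W) (a : ℕ) (ha : G.dist ρ w + a ≤ r) :
    (desc hT ρ w a).card = m ^ a := by
  induction a with
  | zero => rw [desc_zero hT]; simp
  | succ a ih =>
    have hdisj : ∀ u1 ∈ desc hT ρ w a, ∀ u2 ∈ desc hT ρ w a, u1 ≠ u2 →
        Disjoint (desc hT ρ u1 1) (desc hT ρ u2 1) := by
      intro u1 h1 u2 h2 hne
      rw [mem_desc hT] at h1 h2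
      rw [Finset.disjoint_left]
      intro v hv1 hv2
      rw [mem_desc hT] at hv1 hv2
      apply hne
      have e1 : ancAt hT ρ (G.dist ρ u1) v = u1 := hv1.2
      have e2 : ancAt hT ρ (G.dist ρ u2) v = u2 := hv2.2
      have : G.dist ρ u1 = G.dist ρ u2 := by omega
      rw [this] at e1
      rw [e1] at e2
      exact e2
    have hcard : ∀ u ∈ desc hT ρ w a, (desc hT ρ u 1).card = m := by
      intro u hu
      rw [mem_desc hT] at hu
      exact card_desc_one hT hr0 hdegρ hdeg hleaf (by omega)
    rw [desc_succ hT, Finset.card_biUnion hdisj, Finset.sum_congr rfl hcard,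
      Finset.sum_const, ih (by omega), smul_eq_mul, pow_succ]

lemma desc_empty (hT : G.IsTree) {r : ℕ} (hle : ∀ v : W, G.dist ρ v ≤ r)
    (w : W) (a : ℕ) (ha : r < G.dist ρ w + a) :
    desc hT ρ w a = ∅ := by
  apply Finset.eq_empty_of_forall_notMem
  intro v hv
  rw [mem_desc hT] at hv
  have := hle v
  omega


-- ===== from f.lean =====

/-- ordered pairs at distance `t`. -/
noncomputable def pairSet (G : SimpleGraph W) (t : ℕ) : Finset (W × W) :=
  @Finset.filter _ (fun q => G.dist q.1 q.2 = t) (Classical.decPred _) Finset.univ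

lemma mem_pairSet {t : ℕ} {q : W × W} :
    q ∈ pairSet G t ↔ G.dist q.1 q.2 = t := by
  simp [pairSet]

/-- ordered pairs whose meet is `w`, going `a` levels down on the left and `b` on the
right. -/
noncomputable def QSet (hT : G.IsTree) (ρ w : W) (a b : ℕ) : Finset (W × W) :=
  @Finset.filter _
    (fun q => a = 0 ∨ b = 0 ∨
      ancAt hT ρ (G.dist ρ w + 1) q.1 ≠ ancAt hT ρ (G.dist ρ w + 1) q.2)
    (Classical.decPred _) ((desc hT ρ w a) ×ˢ (desc hT ρ w b))

lemma mem_QSet (hT : G.IsTree) {w : W} {a b : ℕ} {q : W × W} :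
    q ∈ QSet hT ρ w a b ↔ q.1 ∈ desc hT ρ w a ∧ q.2 ∈ desc hT ρ w b ∧
      (a = 0 ∨ b = 0 ∨
        ancAt hT ρ (G.dist ρ w + 1) q.1 ≠ ancAt hT ρ (G.dist ρ w + 1) q.2) := by
  simp [QSet, Finset.mem_filter, Finset.mem_product, and_assoc]

lemma QSet_mu (hT : G.IsTree) {w : W} {a b : ℕ} {q : W × W}
    (hq : q ∈ QSet hT ρ w a b) : mu hT ρ q.1 q.2 = G.dist ρ w := by
  rw [mem_QSet hT] at hq
  obtain ⟨h1, h2, h3⟩ := hq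
  rw [mem_desc hT] at h1 h2
  apply le_antisymm
  · by_contra hlt
    push_neg at hlt
    have hmu1 := mu_le_left hT (ρ := ρ) q.1 q.2
    have hmu2 := mu_le_right hT (ρ := ρ) q.1 q.2
    have ha : a ≠ 0 := by omega
    have hb : b ≠ 0 := by omega
    rcases h3 with h | h | h
    · exact ha h
    · exact hb h
    · apply h
      have e1 : ancAt hT ρ (G.dist ρ w + 1) (ancAt hT ρ (mu hT ρ q.1 q.2) q.1)
          = ancAt hT ρ (G.dist ρ w + 1) q.1 := ancAt_ancAt hT (by omega) (by omega)
      have e2 : ancAt hT ρ (G.dist ρ w + 1) (ancAt hT ρ (mu hT ρ q.1 q.2) q.2)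
          = ancAt hT ρ (G.dist ρ w + 1) q.2 := ancAt_ancAt hT (by omega) (by omega)
      rw [← e1, ← e2, ancAt_mu hT]
  · exact le_mu hT (by omega) (by omega) (by rw [h1.2, h2.2])

lemma QSet_dist (hT : G.IsTree) {w : W} {a b : ℕ} {q : W × W}
    (hq : q ∈ QSet hT ρ w a b) : G.dist q.1 q.2 = a + b := by
  have hmu := QSet_mu hT hq
  rw [mem_QSet hT] at hq
  obtain ⟨h1, h2, _⟩ := hq
  rw [mem_desc hT] at h1 h2
  have := dist_formula' hT ρ q.1 q.2
  omega

/-- decomposition of the set of ordered pairs at distance `t` by meet vertex and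
left leg length. -/
lemma pairSet_decomp (hT : G.IsTree) (t : ℕ) (ht : 0 < t) :
    pairSet G t = (Finset.univ ×ˢ Finset.range (t+1)).biUnion
      (fun x : W × ℕ => QSet hT ρ x.1 x.2 (t - x.2)) := by
  ext q
  rw [Finset.mem_biUnion]
  constructor
  · intro hq
    have hdist : G.dist q.1 q.2 = t := by
      simpa [pairSet] using hq
    set j := mu hT ρ q.1 q.2 with hj
    have hj1 := mu_le_left hT (ρ := ρ) q.1 q.2
    have hj2 := mu_le_right hT (ρ := ρ) q.1 q.2
    have hform := dist_formula' hT ρ q.1 q.2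
    set w := ancAt hT ρ j q.1 with hw
    have hdw : G.dist ρ w = j := dist_ancAt hT hj1
    set a := G.dist ρ q.1 - j with ha
    refine ⟨(w, a), ?_, ?_⟩
    · simp only [Finset.mem_product, Finset.mem_univ, Finset.mem_range, true_and]
      omega
    · have hb : t - a = G.dist ρ q.2 - j := by omega
      rw [mem_QSet hT]
      refine ⟨?_, ?_, ?_⟩
      · rw [mem_desc hT, hdw]
        exact ⟨by omega, rfl⟩
      · rw [mem_desc hT, hdw]
        refine ⟨by omega, ?_⟩
        rw [hw, ancAt_mu hT]
      · by_cases ha0 : a = 0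
        · exact Or.inl ha0
        · by_cases hb0 : t - a = 0
          · exact Or.inr (Or.inl hb0)
          · refine Or.inr (Or.inr ?_)
            rw [hdw]
            intro heq
            have : j + 1 ≤ mu hT ρ q.1 q.2 :=
              le_mu hT (by omega) (by omega) heq
            omega
  · rintro ⟨⟨w, a⟩, hmem, hq⟩
    simp only [Finset.mem_product, Finset.mem_univ, Finset.mem_range, true_and] at hmem
    have := QSet_dist hT hq
    simp only [pairSet, Finset.mem_filter, Finset.mem_univ, true_and]
    rw [this]
    omega

lemma QSet_pairwise_disjoint (hT : G.IsTree) (t : ℕ) (ht : 0 < t) :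
    ∀ x ∈ Finset.univ ×ˢ Finset.range (t+1), ∀ y ∈ Finset.univ ×ˢ Finset.range (t+1),
      x ≠ y → Disjoint (QSet hT ρ x.1 x.2 (t - x.2)) (QSet hT ρ y.1 y.2 (t - y.2)) := by
  rintro ⟨w, a⟩ hx ⟨w', a'⟩ hy hne
  rw [Finset.disjoint_left]
  intro q hq hq'
  apply hne
  have h1 := QSet_mu hT hq
  have h2 := QSet_mu hT hq'
  rw [mem_QSet hT] at hq hq'
  have hd1 := (mem_desc hT).1 hq.1
  have hd2 := (mem_desc hT).1 hq'.1
  dsimp only at h1 h2 hd1 hd2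
  have hdw : G.dist ρ w = G.dist ρ w' := by omega
  have hww : w = w' := by
    rw [← hd1.2, ← hd2.2, hdw]
  have haa : a = a' := by omega
  rw [hww, haa]


-- ===== from g.lean =====



lemma QSet_card_empty (hT : G.IsTree) (hle : ∀ v : W, G.dist ρ v ≤ r)
    {w : W} {a b : ℕ} (h : r < G.dist ρ w + a ∨ r < G.dist ρ w + b) :
    (QSet hT ρ w a b).card = 0 := by
  rw [Finset.card_eq_zero]
  apply Finset.eq_empty_of_forall_notMem
  intro q hq
  rw [mem_QSet hT] at hq
  rcases h with h | h
  · rw [desc_empty hT hle w a h] at hq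
    exact absurd hq.1 (Finset.notMem_empty _)
  · rw [desc_empty hT hle w b h] at hq
    exact absurd hq.2.1 (Finset.notMem_empty _)

lemma QSet_card_left0 (hT : G.IsTree) (hr0 : 0 < r)
    (hdegρ : 0 < r → G.degree ρ = m)
    (hdeg : ∀ v : W, v ≠ ρ → G.degree v = 1 ∨ G.degree v = m + 1)
    (hleaf : ∀ v : W, G.degree v = 1 → G.dist ρ v = r)
    {w : W} {b : ℕ} (h : G.dist ρ w + b ≤ r) :
    (QSet hT ρ w 0 b).card = m ^ b := by
  have : QSet hT ρ w 0 b = (desc hT ρ w 0) ×ˢ (desc hT ρ w b) := by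
    ext q
    rw [mem_QSet hT, Finset.mem_product]
    exact ⟨fun h => ⟨h.1, h.2.1⟩, fun h => ⟨h.1, h.2, Or.inl rfl⟩⟩
  rw [this, Finset.card_product, desc_zero hT, Finset.card_singleton, one_mul,
    desc_card hT hr0 hdegρ hdeg hleaf w b h]

lemma QSet_card_right0 (hT : G.IsTree) (hr0 : 0 < r)
    (hdegρ : 0 < r → G.degree ρ = m)
    (hdeg : ∀ v : W, v ≠ ρ → G.degree v = 1 ∨ G.degree v = m + 1)
    (hleaf : ∀ v : W, G.degree v = 1 → G.dist ρ v = r)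
    {w : W} {a : ℕ} (h : G.dist ρ w + a ≤ r) :
    (QSet hT ρ w a 0).card = m ^ a := by
  have : QSet hT ρ w a 0 = (desc hT ρ w a) ×ˢ (desc hT ρ w 0) := by
    ext q
    rw [mem_QSet hT, Finset.mem_product]
    exact ⟨fun h => ⟨h.1, h.2.1⟩, fun h => ⟨h.1, h.2, Or.inr (Or.inl rfl)⟩⟩
  rw [this, Finset.card_product, desc_zero hT, Finset.card_singleton, mul_one,
    desc_card hT hr0 hdegρ hdeg hleaf w a h]

lemma QSet_card_mid (hT : G.IsTree) (hr0 : 0 < r)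
    (hdegρ : 0 < r → G.degree ρ = m)
    (hdeg : ∀ v : W, v ≠ ρ → G.degree v = 1 ∨ G.degree v = m + 1)
    (hleaf : ∀ v : W, G.degree v = 1 → G.dist ρ v = r)
    {w : W} {a b : ℕ} (ha : 0 < a) (hb : 0 < b)
    (hA : G.dist ρ w + a ≤ r) (hB : G.dist ρ w + b ≤ r) :
    (QSet hT ρ w a b).card = m ^ (a + b) - m ^ (a + b - 1) := by
  classical
  set P := (desc hT ρ w a) ×ˢ (desc hT ρ w b) with hP
  set p : W × W → Prop :=
    fun q => ancAt hT ρ (G.dist ρ w + 1) q.1 = ancAt hT ρ (G.dist ρ w + 1) q.2 with hp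
  have hsplit := Finset.card_filter_add_card_filter_not (s := P) (p := p)
  have hQ : QSet hT ρ w a b = P.filter (fun q => ¬ p q) := by
    ext q
    rw [mem_QSet hT, Finset.mem_filter, Finset.mem_product]
    constructor
    · rintro ⟨h1, h2, h3⟩
      refine ⟨⟨h1, h2⟩, ?_⟩
      rcases h3 with h | h | h
      · omega
      · omega
      · exact h
    · rintro ⟨⟨h1, h2⟩, h3⟩
      exact ⟨h1, h2, Or.inr (Or.inr h3)⟩
  have hS : P.filter p = (desc hT ρ w 1).biUnion
      (fun c => (desc hT ρ c (a-1)) ×ˢ (desc hT ρ c (b-1))) := by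
    ext q
    rw [Finset.mem_filter, Finset.mem_product, Finset.mem_biUnion]
    constructor
    · rintro ⟨⟨h1, h2⟩, h3⟩
      have h3' : ancAt hT ρ (G.dist ρ w + 1) q.1 = ancAt hT ρ (G.dist ρ w + 1) q.2 := h3
      rw [mem_desc hT] at h1 h2
      have hd1 : G.dist ρ w + 1 ≤ G.dist ρ q.1 := by omega
      have hd2 : G.dist ρ w + 1 ≤ G.dist ρ q.2 := by omega
      have hdc : G.dist ρ (ancAt hT ρ (G.dist ρ w + 1) q.1) = G.dist ρ w + 1 :=
        dist_ancAt hT hd1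
      refine ⟨ancAt hT ρ (G.dist ρ w + 1) q.1, ?_, Finset.mem_product.2 ⟨?_, ?_⟩⟩
      · rw [mem_desc hT]
        refine ⟨hdc, ?_⟩
        rw [ancAt_ancAt hT (by omega) hd1]
        exact h1.2
      · rw [mem_desc hT, hdc]
        exact ⟨by omega, rfl⟩
      · rw [mem_desc hT, hdc]
        refine ⟨by omega, ?_⟩
        rw [← h3']
    · rintro ⟨c, hc, hmem⟩
      rw [Finset.mem_product] at hmem
      obtain ⟨h1, h2⟩ := hmem
      rw [mem_desc hT] at hc h1 h2
      have hdc : G.dist ρ c = G.dist ρ w + 1 := hc.1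
      refine ⟨⟨?_, ?_⟩, ?_⟩
      · rw [mem_desc hT]
        refine ⟨by omega, ?_⟩
        rw [← ancAt_ancAt hT (i := G.dist ρ w) (j := G.dist ρ c) (by omega) (by omega),
          h1.2, hc.2]
      · rw [mem_desc hT]
        refine ⟨by omega, ?_⟩
        rw [← ancAt_ancAt hT (i := G.dist ρ w) (j := G.dist ρ c) (by omega) (by omega),
          h2.2, hc.2]
      · show ancAt hT ρ (G.dist ρ w + 1) q.1 = ancAt hT ρ (G.dist ρ w + 1) q.2
        have e1 : ancAt hT ρ (G.dist ρ w + 1) q.1 = c := by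
          rw [← hdc, h1.2]
        have e2 : ancAt hT ρ (G.dist ρ w + 1) q.2 = c := by
          rw [← hdc, h2.2]
        rw [e1, e2]
  have hdisjS : ∀ c1 ∈ desc hT ρ w 1, ∀ c2 ∈ desc hT ρ w 1, c1 ≠ c2 →
      Disjoint ((desc hT ρ c1 (a-1)) ×ˢ (desc hT ρ c1 (b-1)))
        ((desc hT ρ c2 (a-1)) ×ˢ (desc hT ρ c2 (b-1))) := by
    intro c1 hc1 c2 hc2 hne
    rw [Finset.disjoint_left]
    intro q hq1 hq2
    rw [Finset.mem_product] at hq1 hq2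
    rw [mem_desc hT] at hc1 hc2
    have e1 := ((mem_desc hT).1 hq1.1).2
    have e2 := ((mem_desc hT).1 hq2.1).2
    apply hne
    have : G.dist ρ c1 = G.dist ρ c2 := by omega
    rw [this] at e1
    rw [e1] at e2
    exact e2
  have hcardS : (P.filter p).card = m * (m ^ (a-1) * m ^ (b-1)) := by
    rw [hS, Finset.card_biUnion hdisjS]
    have hterm : ∀ c ∈ desc hT ρ w 1,
        ((desc hT ρ c (a-1)) ×ˢ (desc hT ρ c (b-1))).card = m ^ (a-1) * m ^ (b-1) := by
      intro c hc
      rw [mem_desc hT] at hc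
      rw [Finset.card_product,
        desc_card hT hr0 hdegρ hdeg hleaf c (a-1) (by omega),
        desc_card hT hr0 hdegρ hdeg hleaf c (b-1) (by omega)]
    rw [Finset.sum_congr rfl hterm, Finset.sum_const,
      desc_card hT hr0 hdegρ hdeg hleaf w 1 (by omega), smul_eq_mul, pow_one]
  have hcardP : P.card = m ^ a * m ^ b := by
    rw [hP, Finset.card_product,
      desc_card hT hr0 hdegρ hdeg hleaf w a hA,
      desc_card hT hr0 hdegρ hdeg hleaf w b hB]
  have e1 : m ^ a * m ^ b = m ^ (a + b) := (pow_add m a b).symm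
  have e2 : m * (m ^ (a-1) * m ^ (b-1)) = m ^ (a + b - 1) := by
    rw [← pow_add m (a-1) (b-1), ← pow_succ']
    congr 1
    omega
  have hQcard : (QSet hT ρ w a b).card = P.card - (P.filter p).card := by
    rw [hQ]
    omega
  rw [hQcard, hcardP, hcardS, e1, e2]

-- ===== from h.lean =====

/-- value of `|QSet w a (t-a)|` as a function of the depth of `w`. -/
def cf (m r t a d : ℕ) : ℕ :=
  if a = 0 ∨ a = t then (if d + t ≤ r then m ^ t else 0)
  else (if d + a ≤ r ∧ d + (t - a) ≤ r then m ^ t - m ^ (t-1) else 0)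

lemma QSet_card_eval {m r : ℕ} (hT : G.IsTree) (hr0 : 0 < r)
    (hdegρ : 0 < r → G.degree ρ = m)
    (hdeg : ∀ v : W, v ≠ ρ → G.degree v = 1 ∨ G.degree v = m + 1)
    (hleaf : ∀ v : W, G.degree v = 1 → G.dist ρ v = r)
    (hle : ∀ v : W, G.dist ρ v ≤ r)
    {t a : ℕ} (ht : 0 < t) (hat : a ≤ t) (w : W) :
    (QSet hT ρ w a (t - a)).card = cf m r t a (G.dist ρ w) := by
  unfold cf
  by_cases h0 : a = 0
  · subst h0
    simp only [Nat.sub_zero, true_or, if_true]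
    by_cases hd : G.dist ρ w + t ≤ r
    · rw [if_pos hd]
      exact QSet_card_left0 hT hr0 hdegρ hdeg hleaf hd
    · rw [if_neg hd]
      exact QSet_card_empty hT hle (Or.inr (by omega))
  · by_cases h1 : a = t
    · subst h1
      simp only [h0, Nat.sub_self, or_true, if_true]
      by_cases hd : G.dist ρ w + a ≤ r
      · rw [if_pos hd]
        exact QSet_card_right0 hT hr0 hdegρ hdeg hleaf hd
      · rw [if_neg hd]
        exact QSet_card_empty hT hle (Or.inl (by omega))
    · have hcond : ¬ (a = 0 ∨ a = t) := by tauto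
      rw [if_neg hcond]
      by_cases hd : G.dist ρ w + a ≤ r ∧ G.dist ρ w + (t - a) ≤ r
      · rw [if_pos hd]
        have := QSet_card_mid hT hr0 hdegρ hdeg hleaf
          (w := w) (a := a) (b := t - a) (by omega) (by omega) hd.1 hd.2
        rw [this]
        congr 1 <;> congr 1 <;> omega
      · rw [if_neg hd]
        push_neg at hd
        by_cases hda : G.dist ρ w + a ≤ r
        · exact QSet_card_empty hT hle (Or.inr (hd hda))
        · exact QSet_card_empty hT hle (Or.inl (by omega))

/-- summing a function of the depth over all vertices. -/
lemma sum_depth {m r : ℕ} (hT : G.IsTree) (hr0 : 0 < r)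
    (hdegρ : 0 < r → G.degree ρ = m)
    (hdeg : ∀ v : W, v ≠ ρ → G.degree v = 1 ∨ G.degree v = m + 1)
    (hleaf : ∀ v : W, G.degree v = 1 → G.dist ρ v = r)
    (hle : ∀ v : W, G.dist ρ v ≤ r)
    (F : ℕ → ℕ) :
    ∑ w : W, F (G.dist ρ w) = ∑ d ∈ Finset.range (r+1), m ^ d * F d := by
  classical
  have hmaps : ∀ w ∈ (Finset.univ : Finset W), G.dist ρ w ∈ Finset.range (r+1) := by
    intro w _
    rw [Finset.mem_range]
    have := hle w
    omega
  rw [← Finset.sum_fiberwise_of_maps_to hmaps (fun w => F (G.dist ρ w))]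
  apply Finset.sum_congr rfl
  intro d hd
  rw [Finset.mem_range] at hd
  have hcard : (Finset.univ.filter (fun w => G.dist ρ w = d)).card = m ^ d := by
    have : Finset.univ.filter (fun w => G.dist ρ w = d) = desc hT ρ ρ d := by
      ext v
      rw [Finset.mem_filter, mem_desc hT, SimpleGraph.dist_self, ancAt_zero hT]
      simp
    rw [this]
    exact desc_card hT hr0 hdegρ hdeg hleaf ρ d (by rw [SimpleGraph.dist_self]; omega)
  have hconst : ∀ w ∈ Finset.univ.filter (fun w => G.dist ρ w = d),
      F (G.dist ρ w) = F d := by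
    intro w hw
    rw [Finset.mem_filter] at hw
    rw [hw.2]
  rw [Finset.sum_congr rfl hconst, Finset.sum_const, hcard, smul_eq_mul]

/-- the number of ordered pairs is twice the number of unordered pairs. -/
lemma pairSet_card_eq (t : ℕ) (ht : 0 < t) :
    (pairSet G t).card = 2 * pathCount G t := by
  classical
  unfold pathCount
  set T := (Finset.univ.filter fun p : Sym2 W => ∃ u v : W, p = s(u, v) ∧ G.dist u v = t)
    with hTdef
  have hmaps : ∀ q ∈ pairSet G t, s(q.1, q.2) ∈ T := by
    intro q hq
    rw [mem_pairSet] at hq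
    rw [hTdef, Finset.mem_filter]
    exact ⟨Finset.mem_univ _, q.1, q.2, rfl, hq⟩
  rw [Finset.card_eq_sum_card_fiberwise hmaps]
  have hfib : ∀ p ∈ T, ((pairSet G t).filter (fun q => s(q.1, q.2) = p)).card = 2 := by
    intro p hp
    rw [hTdef, Finset.mem_filter] at hp
    obtain ⟨-, u, v, rfl, hd⟩ := hp
    have hne : u ≠ v := by
      intro h; subst h
      rw [SimpleGraph.dist_self] at hd
      omega
    have : (pairSet G t).filter (fun q => s(q.1, q.2) = s(u, v))
        = {(u, v), (v, u)} := by
      ext q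
      rw [Finset.mem_filter, mem_pairSet, Finset.mem_insert, Finset.mem_singleton]
      constructor
      · rintro ⟨hdist, heq⟩
        rw [Sym2.eq_iff] at heq
        rcases heq with ⟨h1, h2⟩ | ⟨h1, h2⟩
        · left; exact Prod.ext h1 h2
        · right; exact Prod.ext h1 h2
      · rintro (rfl | rfl)
        · exact ⟨hd, rfl⟩
        · refine ⟨?_, Sym2.eq_swap⟩
          rw [SimpleGraph.dist_comm]
          exact hd
    rw [this]
    rw [Finset.card_insert_of_notMem, Finset.card_singleton]
    rw [Finset.mem_singleton]
    intro h
    exact hne (congrArg Prod.fst h)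
  rw [Finset.sum_congr rfl hfib, Finset.sum_const, smul_eq_mul, mul_comm]

/-- the master counting lemma. -/
lemma pairSet_card_eval {m r : ℕ} (hT : G.IsTree) (hr0 : 0 < r)
    (hdegρ : 0 < r → G.degree ρ = m)
    (hdeg : ∀ v : W, v ≠ ρ → G.degree v = 1 ∨ G.degree v = m + 1)
    (hleaf : ∀ v : W, G.degree v = 1 → G.dist ρ v = r)
    (hle : ∀ v : W, G.dist ρ v ≤ r)
    (t : ℕ) (ht : 0 < t) :
    (pairSet G t).card
      = ∑ a ∈ Finset.range (t+1), ∑ d ∈ Finset.range (r+1), m ^ d * cf m r t a d := by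
  rw [pairSet_decomp hT t ht, Finset.card_biUnion (QSet_pairwise_disjoint hT t ht)]
  rw [Finset.sum_product]
  rw [Finset.sum_comm]
  apply Finset.sum_congr rfl
  intro a ha
  rw [Finset.mem_range] at ha
  have : ∀ w ∈ (Finset.univ : Finset W),
      (QSet hT ρ w a (t - a)).card = cf m r t a (G.dist ρ w) := by
    intro w _
    exact QSet_card_eval hT hr0 hdegρ hdeg hleaf hle ht (by omega) w
  rw [Finset.sum_congr rfl this]
  exact sum_depth hT hr0 hdegρ hdeg hleaf hle (cf m r t a)


-- ===== from i.lean =====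



/-- helper: truncated geometric-type sum. -/
lemma sum_cut (m K C rr : ℕ) (hC : C ≤ rr) (P : ℕ → Prop) [DecidablePred P]
    (hP : ∀ d, P d ↔ d + C ≤ rr) :
    ∑ d ∈ range (rr+1), m ^ d * (if P d then K else 0)
      = K * ∑ d ∈ range (rr - C + 1), m ^ d := by
  have hsub : range (rr - C + 1) ⊆ range (rr + 1) := by
    apply Finset.range_subset_range.2
    omega
  have hzero : ∀ d ∈ range (rr+1), d ∉ range (rr - C + 1) →
      m ^ d * (if P d then K else 0) = 0 := by
    intro d hd hnd
    rw [Finset.mem_range] at hd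
    rw [Finset.mem_range] at hnd
    rw [if_neg]
    · ring
    · rw [hP]
      omega
  rw [← Finset.sum_subset hsub hzero]
  rw [Finset.mul_sum]
  apply Finset.sum_congr rfl
  intro d hd
  rw [Finset.mem_range] at hd
  rw [if_pos]
  · ring
  · rw [hP]
    omega

/-- splitting a sum of `M (min a (2k - a))`. -/
lemma sum_min_split (M : ℕ → ℕ) (k : ℕ) (hk : 1 ≤ k) :
    ∑ a ∈ Finset.Ico 1 (2*k), M (min a (2*k - a)) = M k + 2 * ∑ a ∈ Finset.Ico 1 k, M a := by
  rw [← Finset.sum_Ico_consecutive (fun a => M (min a (2*k - a)))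
    (by omega : 1 ≤ k + 1) (by omega : k + 1 ≤ 2*k)]
  have h1 : ∑ a ∈ Finset.Ico 1 (k+1), M (min a (2*k - a)) = ∑ a ∈ Finset.Ico 1 (k+1), M a := by
    apply Finset.sum_congr rfl
    intro a ha
    rw [Finset.mem_Ico] at ha
    congr 1
    omega
  have h2 : ∑ a ∈ Finset.Ico (k+1) (2*k), M (min a (2*k - a))
      = ∑ a ∈ Finset.Ico (k+1) (2*k), M (2*k - a) := by
    apply Finset.sum_congr rfl
    intro a ha
    rw [Finset.mem_Ico] at ha
    congr 1
    omega
  have h3 : ∑ a ∈ Finset.Ico (k+1) (2*k), M (2*k - a) = ∑ a ∈ Finset.Ico 1 k, M a := by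
    have := Finset.sum_Ico_reflect M (k+1) (by omega : 2*k ≤ 2*k + 1)
    rw [this]
    have e1 : 2*k + 1 - 2*k = 1 := by omega
    have e2 : 2*k + 1 - (k+1) = k := by omega
    rw [e1, e2]
  rw [h1, h2, h3, Finset.sum_Ico_succ_top (by omega : 1 ≤ k)]
  ring

/-- the natural-number evaluation of the double sum. -/
lemma N_eval (m j s : ℕ) :
    (∑ a ∈ Finset.range (2*(j+1)+1), ∑ d ∈ Finset.range ((2*(j+1)+s)+1),
        m ^ d * cf m (2*(j+1)+s) (2*(j+1)) a d)
      = 2 * (m ^ (2*(j+1)) * ∑ d ∈ Finset.range (s+1), m ^ d)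
        + (m ^ (2*(j+1)) - m ^ (2*j+1)) *
            ((∑ d ∈ Finset.range (s+(j+1)+1), m ^ d)
              + 2 * ∑ a ∈ Finset.Ico 1 (j+1), (∑ d ∈ Finset.range (s+a+1), m ^ d)) := by
  set k := j + 1 with hk
  set t := 2 * k with ht
  set r := t + s with hr
  -- outer split: a = 0, middle, a = t
  have houter : ∀ f : ℕ → ℕ, ∑ a ∈ range (t+1), f a
      = f 0 + ∑ a ∈ Finset.Ico 1 t, f a + f t := by
    intro f
    rw [Finset.range_eq_Ico,
      ← Finset.sum_Ico_consecutive f (by omega : 0 ≤ 1) (by omega : 1 ≤ t + 1),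
      Finset.sum_Ico_succ_top (by omega : 1 ≤ t)]
    have : ∑ a ∈ Finset.Ico 0 1, f a = f 0 := by
      rw [Finset.sum_Ico_eq_sum_range]
      simp
    rw [this]
    ring
  rw [houter]
  -- a = 0 term
  have hf0 : ∑ d ∈ Finset.range (r+1), m ^ d * cf m r t 0 d
      = m ^ t * ∑ d ∈ Finset.range (s+1), m ^ d := by
    have : ∀ d, cf m r t 0 d = if d + t ≤ r then m ^ t else 0 := by
      intro d
      simp [cf]
    rw [Finset.sum_congr rfl (fun d _ => by rw [this d])]
    have := sum_cut m (m ^ t) t r (by omega) (fun d => d + t ≤ r) (fun d => Iff.rfl)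
    rw [this]
    have e : r - t = s := by omega
    rw [e]
  -- a = t term
  have hft : ∑ d ∈ Finset.range (r+1), m ^ d * cf m r t t d
      = m ^ t * ∑ d ∈ Finset.range (s+1), m ^ d := by
    have : ∀ d, cf m r t t d = if d + t ≤ r then m ^ t else 0 := by
      intro d
      simp [cf]
    rw [Finset.sum_congr rfl (fun d _ => by rw [this d])]
    have := sum_cut m (m ^ t) t r (by omega) (fun d => d + t ≤ r) (fun d => Iff.rfl)
    rw [this]
    have e : r - t = s := by omega
    rw [e]
  -- middle terms
  have hmid : ∑ a ∈ Finset.Ico 1 t, ∑ d ∈ Finset.range (r+1), m ^ d * cf m r t a d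
      = (m ^ t - m ^ (t-1)) *
          ((∑ d ∈ Finset.range (s+k+1), m ^ d)
            + 2 * ∑ a ∈ Finset.Ico 1 k, (∑ d ∈ Finset.range (s+a+1), m ^ d)) := by
    have hterm : ∀ a ∈ Finset.Ico 1 t, ∑ d ∈ Finset.range (r+1), m ^ d * cf m r t a d
        = (m ^ t - m ^ (t-1)) * ∑ d ∈ Finset.range (s + min a (t - a) + 1), m ^ d := by
      intro a ha
      rw [Finset.mem_Ico] at ha
      have ha0 : a ≠ 0 := by omega
      have hat : a ≠ t := by omega
      have : ∀ d, cf m r t a d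
          = if d + a ≤ r ∧ d + (t - a) ≤ r then m ^ t - m ^ (t-1) else 0 := by
        intro d
        simp [cf, ha0, hat]
      rw [Finset.sum_congr rfl (fun d _ => by rw [this d])]
      have := sum_cut m (m ^ t - m ^ (t-1)) (max a (t - a)) r (by omega)
        (fun d => d + a ≤ r ∧ d + (t - a) ≤ r) (fun d => by omega)
      rw [this]
      have e : r - max a (t - a) = s + min a (t - a) := by omega
      rw [e]
    rw [Finset.sum_congr rfl hterm]
    rw [← Finset.mul_sum]
    congr 1
    have := sum_min_split (fun c => ∑ d ∈ Finset.range (s + c + 1), m ^ d) k (by omega)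
    rw [ht]
    rw [this]
  rw [hf0, hft, hmid]
  have htm1 : t - 1 = 2*j + 1 := by omega
  rw [htm1]
  have hsk : s + k = s + (j+1) := by omega
  rw [hsk]
  ring


-- ===== from j.lean =====

lemma arith_q (m j s : ℕ) (hm : 2 ≤ m) :
    ((2 * (m ^ (2*(j+1)) * ∑ d ∈ Finset.range (s+1), m ^ d)
      + (m ^ (2*(j+1)) - m ^ (2*j+1)) *
          ((∑ d ∈ Finset.range (s+(j+1)+1), m ^ d)
            + 2 * ∑ a ∈ Finset.Ico 1 (j+1), (∑ d ∈ Finset.range (s+a+1), m ^ d)) : ℕ) : ℚ)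
    = 2 * ((m:ℚ)^(2*j+1) *
        ((1/2)*((m:ℚ)+1)*(((m:ℚ)^(s+j+2) - 1)/((m:ℚ)-1)) - ((j:ℚ)+1))) := by
  have hle : m ^ (2*j+1) ≤ m ^ (2*(j+1)) := Nat.pow_le_pow_right (by omega) (by omega)
  have hx2 : (2:ℚ) ≤ (m:ℚ) := by exact_mod_cast hm
  have hx1 : (m:ℚ) ≠ 1 := by intro h; rw [h] at hx2; norm_num at hx2
  have hxne : (m:ℚ) - 1 ≠ 0 := by
    intro h
    apply hx1
    linarith
  push_cast [Nat.cast_sub hle]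
  set x : ℚ := (m:ℚ) with hxdef
  -- geometric sums
  have hgeom : ∀ n : ℕ, ∑ d ∈ Finset.range (n+1), x ^ d = (x ^ (n+1) - 1)/(x - 1) :=
    fun n => geom_sum_eq hx1 (n+1)
  rw [hgeom, hgeom]
  have hinner : ∑ a ∈ Finset.Ico 1 (j+1), (∑ d ∈ Finset.range (s+a+1), x ^ d)
      = (x^(s+2) * ((x^j - 1)/(x-1)) - (j:ℚ))/(x-1) := by
    have h1 : ∀ a ∈ Finset.Ico 1 (j+1), (∑ d ∈ Finset.range (s+a+1), x ^ d)
        = (x ^ (s+a+1) - 1)/(x - 1) := fun a _ => hgeom (s+a)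
    rw [Finset.sum_congr rfl h1, Finset.sum_Ico_eq_sum_range]
    have h2 : ∀ i ∈ Finset.range (j+1-1), (x ^ (s+(1+i)+1) - 1)/(x - 1)
        = (x^(s+2) * x^i - 1)/(x-1) := by
      intro i _
      have he : s+(1+i)+1 = (s+2)+i := by omega
      rw [he, pow_add]
    rw [Finset.sum_congr rfl h2, ← Finset.sum_div, Finset.sum_sub_distrib,
      ← Finset.mul_sum, Finset.sum_const, Finset.card_range]
    have hj1 : j + 1 - 1 = j := by omega
    rw [hj1, geom_sum_eq hx1 j]
    push_cast
    ring
  rw [hinner]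
  field_simp
  ring

end TreeAux

end TreeAuxStuff

theorem rooted_even_paths_large_depth (m k r : ℕ) (hm : 2 ≤ m)
    (hk : 1 ≤ k) (hr : 2 * k ≤ r)
    {W : Type} [Fintype W] [DecidableEq W] (G : SimpleGraph W) [DecidableRel G.Adj]
    (ρ : W) (hG : IsPerfectRootedMary m r G ρ) :
    (pathCount G (2 * k) : ℚ) =
      (m : ℚ) ^ (2 * k - 1) *
        ((1 / 2) * ((m : ℚ) + 1) * (((m : ℚ) ^ (r - k + 1) - 1) / ((m : ℚ) - 1)) -
          (k : ℚ)) := by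
  obtain ⟨j, rfl⟩ : ∃ j, k = j + 1 := ⟨k - 1, by omega⟩
  obtain ⟨s, rfl⟩ : ∃ s, r = 2*(j+1) + s := ⟨r - 2*(j+1), by omega⟩
  obtain ⟨hT, hdegρ, hdeg, hle, hmax, hleaf⟩ := hG
  have hr0 : 0 < 2*(j+1) + s := by omega
  have h1 : (TreeAux.pairSet G (2*(j+1))).card = 2 * pathCount G (2*(j+1)) :=
    TreeAux.pairSet_card_eq _ (by omega)
  have h2 := TreeAux.pairSet_card_eval (ρ := ρ) (m := m) (r := 2*(j+1)+s)
    hT hr0 hdegρ hdeg hleaf hle (2*(j+1)) (by omega)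
  have h3 := TreeAux.N_eval m j s
  have h4 : 2 * pathCount G (2*(j+1))
      = 2 * (m ^ (2*(j+1)) * ∑ d ∈ Finset.range (s+1), m ^ d)
        + (m ^ (2*(j+1)) - m ^ (2*j+1)) *
            ((∑ d ∈ Finset.range (s+(j+1)+1), m ^ d)
              + 2 * ∑ a ∈ Finset.Ico 1 (j+1), (∑ d ∈ Finset.range (s+a+1), m ^ d)) := by
    rw [← h1, h2, h3]
  have h5 := TreeAux.arith_q m j s hm
  have h6 : ((2 * pathCount G (2*(j+1)) : ℕ) : ℚ)
      = 2 * ((m:ℚ)^(2*j+1) *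
        ((1/2)*((m:ℚ)+1)*(((m:ℚ)^(s+j+2) - 1)/((m:ℚ)-1)) - ((j:ℚ)+1))) := by
    rw [h4]
    exact_mod_cast h5
  have e1 : 2 * (j+1) - 1 = 2*j+1 := by omega
  have e2 : 2*(j+1) + s - (j+1) + 1 = s+j+2 := by omega
  rw [e1, e2]
  push_cast at h6 ⊢
  linarith
end
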